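/- arXiv:2404.01142 — 5 statements merged into one kernel-verified Lean document; each statement's English description precedes it below -/
import Mathlib

section
/- For constants C > 0, δ > 0, and b ∈ ℝ, the integral ∫₀^δ e^{-rt} t^b e^{-C/t} dt is asymptotically equivalent to √(π C^{(2b+1)/2}) · r^{(-2b-3)/4} · e^{-√(4Cr)} as r → ∞. -/
open MeasureTheory Real Filter Set Topology


noncomputable def lapA (C r : ℝ) : ℝ := Real.sqrt (Real.sqrt C * Real.sqrt r)

noncomputable def lapBnd (C δ r : ℝ) : ℝ := lapA C r * (δ * Real.sqrt r / Real.sqrt C - 1)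

noncomputable def lapH (C b r v : ℝ) : ℝ :=
  (1 + v / lapA C r) ^ b * Real.exp (-(v ^ 2) / (1 + v / lapA C r))

noncomputable def lapF (C δ b r v : ℝ) : ℝ :=
  (Ioo (-(lapA C r)) (lapBnd C δ r)).indicator (lapH C b r) v


lemma aux_bdd (B c : ℝ) (hc : 0 < c) :
    ∃ M : ℝ, 0 ≤ M ∧ ∀ x : ℝ, 1 ≤ x → x ^ B * Real.exp (-(c * x)) ≤ M := by
  have h := tendsto_rpow_mul_exp_neg_mul_atTop_nhds_zero B c hc
  have h1 : ∀ᶠ x : ℝ in atTop, x ^ B * Real.exp (-(c * x)) ≤ 1 := by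
    have := h.eventually (eventually_le_nhds (by norm_num : (0:ℝ) < 1))
    simpa [neg_mul] using this
  obtain ⟨x₀, hx₀⟩ := eventually_atTop.mp h1
  have hcont : ContinuousOn (fun x : ℝ => x ^ B * Real.exp (-(c * x))) (Icc 1 x₀) := by
    apply ContinuousOn.mul
    · exact continuousOn_id.rpow_const fun x hx => Or.inl (fun h0 => by simp only [id_eq] at h0; rw [h0] at hx; exact absurd hx.1 (by norm_num))
    · exact Continuous.continuousOn (by continuity)
  obtain ⟨M0, hM0⟩ := (isCompact_Icc).exists_bound_of_continuousOn hcont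
  refine ⟨max M0 1, le_trans zero_le_one (le_max_right _ _), fun x hx => ?_⟩
  rcases le_total x x₀ with h' | h'
  · have := hM0 x ⟨hx, h'⟩
    calc x ^ B * Real.exp (-(c * x)) ≤ ‖x ^ B * Real.exp (-(c * x))‖ := le_abs_self _
      _ ≤ M0 := this
      _ ≤ max M0 1 := le_max_left _ _
  · exact (hx₀ x h').trans (le_max_right _ _)

lemma aux_int : Integrable (fun v : ℝ => Real.exp (-|v| / 2)) := by
  have h1 : IntegrableOn (fun v : ℝ => Real.exp (-|v| / 2)) (Ioi 0) := by
    refine (exp_neg_integrableOn_Ioi 0 (by norm_num : (0:ℝ) < 1/2)).congr_fun ?_ measurableSet_Ioi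
    intro x hx
    simp only []
    rw [abs_of_pos hx]
    ring_nf
  have hIci : IntegrableOn (fun v : ℝ => Real.exp (-|v| / 2)) (Ici 0) :=
    Iff.mpr integrableOn_Ici_iff_integrableOn_Ioi h1
  have h2 : IntegrableOn (fun v : ℝ => Real.exp (-|v| / 2)) (Iic 0) := by
    rw [← integrable_indicator_iff measurableSet_Iic]
    have hg : Integrable ((Ici (0:ℝ)).indicator (fun v : ℝ => Real.exp (-|v| / 2))) :=
      (integrable_indicator_iff measurableSet_Ici).mpr hIci
    have := hg.comp_neg
    refine this.congr (Eventually.of_forall fun v => ?_)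
    show (Ici (0:ℝ)).indicator (fun v : ℝ => Real.exp (-|v| / 2)) (-v)
        = (Iic (0:ℝ)).indicator (fun v : ℝ => Real.exp (-|v| / 2)) v
    by_cases hv : v ≤ 0
    · rw [indicator_of_mem (show -v ∈ Ici (0:ℝ) by simpa using hv),
        indicator_of_mem (show v ∈ Iic (0:ℝ) by simpa using hv)]
      simp
    · rw [indicator_of_notMem (show -v ∉ Ici (0:ℝ) by simp; linarith [not_le.mp hv]),
        indicator_of_notMem (show v ∉ Iic (0:ℝ) by simpa using hv)]
  have : (fun v : ℝ => Real.exp (-|v| / 2)) =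
      (Iic (0:ℝ)).indicator (fun v : ℝ => Real.exp (-|v| / 2)) +
      (Ioi (0:ℝ)).indicator (fun v : ℝ => Real.exp (-|v| / 2)) := by
    funext v
    rcases le_or_gt v 0 with hv | hv
    · simp [indicator_of_mem, hv, indicator_of_notMem, not_lt.mpr hv]
    · simp [indicator_of_notMem (not_le.mpr hv), indicator_of_mem, hv]
  rw [this]
  exact ((integrable_indicator_iff measurableSet_Iic).mpr h2).add
    ((integrable_indicator_iff measurableSet_Ioi).mpr h1)

lemma key_id (C δ b : ℝ) (hC : 0 < C) (hδ : 0 < δ) (r : ℝ) (hr : 0 < r) :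
    (∫ t in Ioo (0:ℝ) δ, Real.exp (-r * t) * t ^ b * Real.exp (-C / t)) /
      (Real.sqrt (π * C ^ ((2 * b + 1) / 2)) * r ^ ((-2 * b - 3) / 4) *
        Real.exp (-Real.sqrt (4 * C * r)))
    = (∫ v in Ioo (-(Real.sqrt (Real.sqrt C * Real.sqrt r)))
          (Real.sqrt (Real.sqrt C * Real.sqrt r) * (δ * Real.sqrt r / Real.sqrt C - 1)),
        (1 + v / Real.sqrt (Real.sqrt C * Real.sqrt r)) ^ b *
          Real.exp (-(v ^ 2) / (1 + v / Real.sqrt (Real.sqrt C * Real.sqrt r)))) / Real.sqrt π := by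
  have hsC : 0 < Real.sqrt C := Real.sqrt_pos.mpr hC
  have hsr : 0 < Real.sqrt r := Real.sqrt_pos.mpr hr
  set lam : ℝ := Real.sqrt C * Real.sqrt r with hlam_def
  have hlam : 0 < lam := mul_pos hsC hsr
  set a : ℝ := Real.sqrt lam with ha_def
  have ha : 0 < a := Real.sqrt_pos.mpr hlam
  have ha2 : a ^ 2 = lam := Real.sq_sqrt hlam.le
  set s : ℝ := Real.sqrt C / Real.sqrt r with hs_def
  have hs : 0 < s := div_pos hsC hsr
  set cc : ℝ := s / a with hcc_def
  have hcc : 0 < cc := div_pos hs ha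
  have hCs : Real.sqrt C * Real.sqrt C = C := Real.mul_self_sqrt hC.le
  have hrs : Real.sqrt r * Real.sqrt r = r := Real.mul_self_sqrt hr.le
  have h1 : r * s = lam := by
    rw [hs_def, hlam_def]
    field_simp
    nlinarith [hrs]
  have h2 : C / s = lam := by
    rw [hs_def, hlam_def]
    field_simp
    nlinarith [hCs]
  set bnd : ℝ := a * (δ * Real.sqrt r / Real.sqrt C - 1) with hbnd_def
  have endptL : cc * (-a) + s = 0 := by
    rw [hcc_def]; field_simp; ring
  have endptR : cc * bnd + s = δ := by
    rw [hcc_def, hbnd_def, hs_def]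
    field_simp
    ring
  have hAB : -a ≤ bnd := by
    have hX : 0 < δ * Real.sqrt r / Real.sqrt C := by positivity
    rw [hbnd_def]
    nlinarith
  -- the substitution identity
  have e2 := intervalIntegral.integral_comp_mul_add (a := -a) (b := bnd)
    (fun t => Real.exp (-r * t) * t ^ b * Real.exp (-C / t)) hcc.ne' s
  rw [endptL, endptR] at e2
  -- pointwise identity on Ioo (-a) bnd
  have hpt : ∀ v ∈ Ioo (-a) bnd,
      Real.exp (-r * (cc * v + s)) * (cc * v + s) ^ b * Real.exp (-C / (cc * v + s))
      = (Real.exp (-(2 * lam)) * s ^ b) * ((1 + v / a) ^ b * Real.exp (-(v ^ 2) / (1 + v / a))) := by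
    intro v hv
    have hu : 0 < 1 + v / a := by
      have h' : -a < v := hv.1
      have : -1 < v / a := by
        rw [neg_lt, ← neg_div]
        exact (div_lt_one ha).mpr (by linarith)
      linarith
    set u : ℝ := 1 + v / a with hu_def
    have ht : cc * v + s = s * u := by
      rw [hcc_def, hu_def]; field_simp; ring
    have hv2 : v ^ 2 = lam * (u - 1) ^ 2 := by
      have hva : v = a * (u - 1) := by rw [hu_def]; field_simp; ring
      rw [hva, mul_pow, ha2]
    have hexp : Real.exp (-(lam * u)) * Real.exp (-(lam / u)) =
        Real.exp (-(2 * lam)) * Real.exp (-(v ^ 2) / u) := by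
      rw [← Real.exp_add, ← Real.exp_add]
      congr 1
      rw [hv2]
      field_simp
      ring
    have hrt : -r * (s * u) = -(lam * u) := by rw [← h1]; ring
    have hCt : -C / (s * u) = -(lam / u) := by rw [← h2]; field_simp
    rw [ht, hrt, hCt, Real.mul_rpow hs.le hu.le]
    linear_combination (s ^ b * u ^ b) * hexp
  -- numerator identity
  have hnum : (∫ t in Ioo (0:ℝ) δ, Real.exp (-r * t) * t ^ b * Real.exp (-C / t))
      = (cc * (Real.exp (-(2 * lam)) * s ^ b)) *
        ∫ v in Ioo (-a) bnd, (1 + v / a) ^ b * Real.exp (-(v ^ 2) / (1 + v / a)) := by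
    have step1 : (∫ t in Ioo (0:ℝ) δ, Real.exp (-r * t) * t ^ b * Real.exp (-C / t))
        = ∫ t in (0:ℝ)..δ, Real.exp (-r * t) * t ^ b * Real.exp (-C / t) := by
      rw [intervalIntegral.integral_of_le hδ.le, integral_Ioc_eq_integral_Ioo]
    have step2 : (∫ t in (0:ℝ)..δ, Real.exp (-r * t) * t ^ b * Real.exp (-C / t))
        = cc * ∫ v in (-a)..bnd,
            Real.exp (-r * (cc * v + s)) * (cc * v + s) ^ b * Real.exp (-C / (cc * v + s)) := by
      rw [e2, smul_eq_mul, ← mul_assoc, mul_inv_cancel₀ hcc.ne', one_mul]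
    have step3 : (∫ v in (-a)..bnd,
          Real.exp (-r * (cc * v + s)) * (cc * v + s) ^ b * Real.exp (-C / (cc * v + s)))
        = ∫ v in Ioo (-a) bnd,
            Real.exp (-r * (cc * v + s)) * (cc * v + s) ^ b * Real.exp (-C / (cc * v + s)) := by
      rw [intervalIntegral.integral_of_le hAB, integral_Ioc_eq_integral_Ioo]
    have step4 : (∫ v in Ioo (-a) bnd,
          Real.exp (-r * (cc * v + s)) * (cc * v + s) ^ b * Real.exp (-C / (cc * v + s)))
        = ∫ v in Ioo (-a) bnd, (Real.exp (-(2 * lam)) * s ^ b) *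
            ((1 + v / a) ^ b * Real.exp (-(v ^ 2) / (1 + v / a))) :=
      setIntegral_congr_fun measurableSet_Ioo hpt
    rw [step1, step2, step3, step4, MeasureTheory.integral_const_mul, ← mul_assoc]
  -- denominator identity
  have hsqrt4 : Real.sqrt (4 * C * r) = 2 * lam := by
    rw [hlam_def, show (4 : ℝ) * C * r = 2 ^ 2 * (C * r) by ring, Real.sqrt_mul (by positivity),
      Real.sqrt_sq (by norm_num : (0:ℝ) ≤ 2), Real.sqrt_mul hC.le]
  have hK : cc * s ^ b = C ^ ((2 * b + 1) / 4) * r ^ ((-2 * b - 3) / 4) := by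
    have hKpos : 0 < cc * s ^ b := mul_pos hcc (Real.rpow_pos_of_pos hs b)
    have hRpos : (0:ℝ) < C ^ ((2 * b + 1) / 4) * r ^ ((-2 * b - 3) / 4) :=
      mul_pos (Real.rpow_pos_of_pos hC _) (Real.rpow_pos_of_pos hr _)
    apply Real.log_injOn_pos (mem_Ioi.mpr hKpos) (mem_Ioi.mpr hRpos)
    rw [Real.log_mul hcc.ne' (Real.rpow_pos_of_pos hs b).ne',
      Real.log_mul (Real.rpow_pos_of_pos hC _).ne' (Real.rpow_pos_of_pos hr _).ne',
      Real.log_rpow hs, Real.log_rpow hC, Real.log_rpow hr, hcc_def,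
      Real.log_div hs.ne' ha.ne', ha_def, Real.log_sqrt hlam.le, hlam_def,
      Real.log_mul hsC.ne' hsr.ne', hs_def, Real.log_div hsC.ne' hsr.ne',
      Real.log_sqrt hC.le, Real.log_sqrt hr.le]
    ring
  have hden : Real.sqrt (π * C ^ ((2 * b + 1) / 2)) * r ^ ((-2 * b - 3) / 4) *
      Real.exp (-Real.sqrt (4 * C * r))
      = (cc * (Real.exp (-(2 * lam)) * s ^ b)) * Real.sqrt π := by
    have hsqC : Real.sqrt (C ^ ((2 * b + 1) / 2)) = C ^ ((2 * b + 1) / 4) := by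
      rw [Real.sqrt_eq_rpow, ← Real.rpow_mul hC.le]
      congr 1
      ring
    rw [Real.sqrt_mul pi_pos.le, hsqC, hsqrt4]
    calc Real.sqrt π * C ^ ((2 * b + 1) / 4) * r ^ ((-2 * b - 3) / 4) * Real.exp (-(2 * lam))
        = (C ^ ((2 * b + 1) / 4) * r ^ ((-2 * b - 3) / 4)) * Real.exp (-(2 * lam)) * Real.sqrt π := by
          ring
      _ = (cc * (Real.exp (-(2 * lam)) * s ^ b)) * Real.sqrt π := by rw [← hK]; ring
  rw [hnum, hden, mul_div_mul_left _ _ (by positivity : cc * (Real.exp (-(2 * lam)) * s ^ b) ≠ 0)]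
set_option maxHeartbeats 1000000 in
lemma lap_dct (C δ b : ℝ) (hC : 0 < C) (hδ : 0 < δ) :
    Tendsto (fun r : ℝ => ∫ v, lapF C δ b r v) atTop (𝓝 (Real.sqrt π)) := by
  have hsC : 0 < Real.sqrt C := Real.sqrt_pos.mpr hC
  obtain ⟨M₁, hM₁0, hM₁⟩ := aux_bdd |b| (1/2) (by norm_num)
  obtain ⟨M₂, hM₂0, hM₂⟩ := aux_bdd |b| (1/8) (by norm_num)
  have h2B : (0:ℝ) ≤ (2:ℝ) ^ |b| := (Real.rpow_pos_of_pos two_pos _).le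
  set A : ℝ := Real.exp 2 * (M₁ + M₂ + 2 ^ |b|) with hA_def
  have hA0 : 0 ≤ A := by positivity
  have hsum : M₁ ≤ M₁ + M₂ + 2 ^ |b| ∧ M₂ ≤ M₁ + M₂ + 2 ^ |b| ∧ (2:ℝ) ^ |b| ≤ M₁ + M₂ + 2 ^ |b| :=
    ⟨by linarith, by linarith, by linarith⟩
  have hAge : ∀ m e : ℝ, 0 ≤ m → m ≤ M₁ + M₂ + 2 ^ |b| → e ≤ Real.exp 2 → 0 ≤ e →
      m * e ≤ A := by
    intro m e hm hmle he he0
    calc m * e ≤ (M₁ + M₂ + 2 ^ |b|) * Real.exp 2 :=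
          mul_le_mul hmle he he0 (by linarith)
      _ = A := by rw [hA_def]; ring
  have hgg : (∫ v : ℝ, Real.exp (-(v ^ 2))) = Real.sqrt π := by
    have := integral_gaussian 1
    simpa using this
  rw [← hgg]
  apply tendsto_integral_filter_of_dominated_convergence
    (bound := fun v => A * Real.exp (-|v| / 2))
  · -- measurability
    refine Eventually.of_forall fun r => ?_
    have hm : Measurable (lapH C b r) := by
      have h1 : Measurable fun v : ℝ => 1 + v / lapA C r :=
        measurable_const.add (measurable_id.div_const _)
      have h2 : Measurable fun v : ℝ => -(v ^ 2) := (measurable_id.pow_const 2).neg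
      exact (h1.pow measurable_const).mul ((h2.div h1).exp)
    exact (hm.indicator measurableSet_Ioo).aestronglyMeasurable
  · -- bound
    filter_upwards [eventually_ge_atTop (max 1 (1 / C))] with r hrge
    have hr1 : (1:ℝ) ≤ r := le_trans (le_max_left _ _) hrge
    have hr : 0 < r := lt_of_lt_of_le one_pos hr1
    have hsr : 0 < Real.sqrt r := Real.sqrt_pos.mpr hr
    have hlam : 0 < Real.sqrt C * Real.sqrt r := mul_pos hsC hsr
    have hlam1 : 1 ≤ Real.sqrt C * Real.sqrt r := by
      rw [← Real.sqrt_mul hC.le]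
      rw [show (1:ℝ) = Real.sqrt 1 from Real.sqrt_one.symm]
      apply Real.sqrt_le_sqrt
      have h' : 1 / C ≤ r := le_trans (le_max_right _ _) hrge
      rw [div_le_iff₀ hC] at h'
      nlinarith
    have ha : 0 < lapA C r := Real.sqrt_pos.mpr hlam
    have ha1 : 1 ≤ lapA C r := by
      rw [lapA, show (1:ℝ) = Real.sqrt 1 from Real.sqrt_one.symm]
      exact Real.sqrt_le_sqrt (by simpa using hlam1)
    have ha2 : lapA C r ^ 2 = Real.sqrt C * Real.sqrt r := Real.sq_sqrt hlam.le
    refine ae_of_all _ fun v => ?_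
    by_cases hv : v ∈ Ioo (-(lapA C r)) (lapBnd C δ r)
    swap
    · rw [lapF, indicator_of_notMem hv, norm_zero]
      positivity
    rw [lapF, indicator_of_mem hv]
    have hu : 0 < 1 + v / lapA C r := by
      have h' : -(lapA C r) < v := hv.1
      have : -1 < v / lapA C r := by
        rw [neg_lt, ← neg_div]
        exact (div_lt_one ha).mpr (by linarith)
      linarith
    set u : ℝ := 1 + v / lapA C r with hu_def
    have hva : v = lapA C r * (u - 1) := by rw [hu_def]; field_simp; ring
    clear_value u
    have hnorm : ‖lapH C b r v‖ = u ^ b * Real.exp (-(v ^ 2) / u) := by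
      rw [lapH, Real.norm_eq_abs, ← hu_def,
        abs_of_nonneg (mul_nonneg (Real.rpow_nonneg hu.le b) (Real.exp_nonneg _))]
    rw [hnorm]
    have hgauss : Real.exp (-(v ^ 2)) ≤ Real.exp 1 * Real.exp (-|v| / 2) := by
      rw [← Real.exp_add]
      apply Real.exp_le_exp.mpr
      have h1 : |v| - 1 ≤ v ^ 2 := by nlinarith [sq_abs v, sq_nonneg (|v| - 1), abs_nonneg v]
      have h2 : 0 ≤ |v| := abs_nonneg v
      linarith
    rcases le_or_gt 1 u with hu1 | hu1
    · -- u ≥ 1, so v ≥ 0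
      have hv0 : 0 ≤ v := by rw [hva]; exact mul_nonneg ha.le (by linarith)
      have hvabs : |v| = v := abs_of_nonneg hv0
      have huv : u ≤ 1 + v := by
        have : v / lapA C r ≤ v := div_le_self hv0 ha1
        rw [hu_def]; linarith
      have hb1 : u ^ b ≤ (1 + v) ^ |b| :=
        le_trans (Real.rpow_le_rpow_of_exponent_le hu1 (le_abs_self b))
          (Real.rpow_le_rpow hu.le huv (abs_nonneg b))
      have hE : Real.exp (-(v ^ 2) / u) ≤ Real.exp (1 - v) := by
        apply Real.exp_le_exp.mpr
        have e1 : v ^ 2 / (1 + v) ≤ v ^ 2 / u := by gcongr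
        have e2 : v - 1 ≤ v ^ 2 / (1 + v) := by
          rw [le_div_iff₀ (by positivity : (0:ℝ) < 1 + v)]
          nlinarith
        rw [neg_div]
        linarith
      have step : u ^ b * Real.exp (-(v ^ 2) / u) ≤ (1 + v) ^ |b| * Real.exp (1 - v) :=
        mul_le_mul hb1 hE (Real.exp_nonneg _) (Real.rpow_nonneg (by positivity) _)
      have hM := hM₁ (1 + v) (by linarith)
      have eexp : Real.exp (1 - v) = Real.exp (-(1 / 2 * (1 + v))) * Real.exp (3 / 2 - v / 2) := by
        rw [← Real.exp_add]; congr 1; ring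
      have step2 : (1 + v) ^ |b| * Real.exp (1 - v) ≤ M₁ * Real.exp (3 / 2 - v / 2) := by
        rw [eexp, ← mul_assoc]
        exact mul_le_mul_of_nonneg_right hM (Real.exp_nonneg _)
      have step3 : M₁ * Real.exp (3 / 2 - v / 2) ≤ A * Real.exp (-|v| / 2) := by
        rw [hvabs, show Real.exp (3 / 2 - v / 2) = Real.exp (3 / 2) * Real.exp (-v / 2) by
          rw [← Real.exp_add]; congr 1; ring]
        rw [← mul_assoc]
        exact mul_le_mul_of_nonneg_right
          (hAge M₁ (Real.exp (3/2)) hM₁0 hsum.1 (Real.exp_le_exp.mpr (by norm_num))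
            (Real.exp_nonneg _)) (Real.exp_nonneg _)
      linarith
    rcases le_or_gt (1/2) u with hu2 | hu2
    · -- 1/2 ≤ u < 1
      have hb1 : u ^ b ≤ 2 ^ |b| := by
        have s1 : u ^ b ≤ u ^ (-|b|) :=
          Real.rpow_le_rpow_of_exponent_ge hu hu1.le (neg_abs_le b)
        have s2 : u ^ (-|b|) = (u⁻¹) ^ |b| := by
          rw [Real.rpow_neg hu.le, ← Real.inv_rpow hu.le]
        have s3 : u⁻¹ ≤ 2 := by
          rw [inv_eq_one_div, div_le_iff₀ hu]; linarith
        calc u ^ b ≤ (u⁻¹) ^ |b| := s2 ▸ s1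
          _ ≤ 2 ^ |b| := Real.rpow_le_rpow (by positivity) s3 (abs_nonneg b)
      have hE : Real.exp (-(v ^ 2) / u) ≤ Real.exp (-(v ^ 2)) := by
        apply Real.exp_le_exp.mpr
        rw [neg_div]
        have : v ^ 2 ≤ v ^ 2 / u := by
          rw [le_div_iff₀ hu]; nlinarith [sq_nonneg v]
        linarith
      calc u ^ b * Real.exp (-(v ^ 2) / u)
          ≤ 2 ^ |b| * Real.exp (-(v ^ 2)) :=
            mul_le_mul hb1 hE (Real.exp_nonneg _) h2B
        _ ≤ 2 ^ |b| * (Real.exp 1 * Real.exp (-|v| / 2)) :=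
            mul_le_mul_of_nonneg_left hgauss h2B
        _ ≤ A * Real.exp (-|v| / 2) := by
            rw [← mul_assoc]
            exact mul_le_mul_of_nonneg_right
              (hAge (2 ^ |b|) (Real.exp 1) h2B hsum.2.2 (Real.exp_le_exp.mpr (by norm_num))
                (Real.exp_nonneg _)) (Real.exp_nonneg _)
    · -- u < 1/2
      have hx2 : (1:ℝ) ≤ 1 / u := by rw [le_div_iff₀ hu]; linarith
      have hM := hM₂ (1 / u) hx2
      have hb1 : u ^ b ≤ (1 / u) ^ |b| := by
        have s1 : u ^ b ≤ u ^ (-|b|) :=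
          Real.rpow_le_rpow_of_exponent_ge hu (by linarith) (neg_abs_le b)
        have s2 : ((1:ℝ) / u) ^ |b| = u ^ (-|b|) := by
          rw [one_div, Real.inv_rpow hu.le, ← Real.rpow_neg hu.le]
        rw [s2]; exact s1
      have hv2 : v ^ 2 = (Real.sqrt C * Real.sqrt r) * (u - 1) ^ 2 := by
        rw [hva, mul_pow, ha2]
      have hsplit : -(v ^ 2) / u =
          -(v ^ 2) + -((Real.sqrt C * Real.sqrt r) * (1 - u) ^ 3 / u) := by
        rw [hv2]; field_simp; ring
      have hE : Real.exp (-(v ^ 2) / u) ≤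
          Real.exp (-(1 / 8 * (1 / u))) * Real.exp (-(v ^ 2)) := by
        rw [hsplit, Real.exp_add, mul_comm]
        apply mul_le_mul_of_nonneg_right _ (Real.exp_nonneg _)
        apply Real.exp_le_exp.mpr
        have hcube : (1/2 : ℝ) ^ 3 ≤ (1 - u) ^ 3 :=
          pow_le_pow_left₀ (by norm_num) (by linarith) 3
        have hmain : 1 / 8 * (1 / u) ≤ (Real.sqrt C * Real.sqrt r) * (1 - u) ^ 3 / u := by
          rw [show (1:ℝ) / 8 * (1 / u) = (1/8) / u by ring]
          gcongr
          nlinarith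
        linarith
      calc u ^ b * Real.exp (-(v ^ 2) / u)
          ≤ (1 / u) ^ |b| * (Real.exp (-(1 / 8 * (1 / u))) * Real.exp (-(v ^ 2))) :=
            mul_le_mul hb1 hE (Real.exp_nonneg _) (Real.rpow_nonneg (by positivity) _)
        _ = ((1 / u) ^ |b| * Real.exp (-(1 / 8 * (1 / u)))) * Real.exp (-(v ^ 2)) := by ring
        _ ≤ M₂ * Real.exp (-(v ^ 2)) := mul_le_mul_of_nonneg_right hM (Real.exp_nonneg _)
        _ ≤ M₂ * (Real.exp 1 * Real.exp (-|v| / 2)) := mul_le_mul_of_nonneg_left hgauss hM₂0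
        _ ≤ A * Real.exp (-|v| / 2) := by
            rw [← mul_assoc]
            exact mul_le_mul_of_nonneg_right
              (hAge M₂ (Real.exp 1) hM₂0 hsum.2.1 (Real.exp_le_exp.mpr (by norm_num))
                (Real.exp_nonneg _)) (Real.exp_nonneg _)
  · -- integrability of the bound
    exact aux_int.const_mul A
  · -- a.e. pointwise limit
    refine ae_of_all _ fun v => ?_
    have hsqrtT : Tendsto Real.sqrt atTop atTop := by
      have := tendsto_rpow_atTop (show (0:ℝ) < 1/2 by norm_num)
      exact this.congr fun x => (Real.sqrt_eq_rpow x).symm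
    have haT : Tendsto (fun r : ℝ => lapA C r) atTop atTop := by
      have inner : Tendsto (fun r : ℝ => Real.sqrt C * Real.sqrt r) atTop atTop :=
        (tendsto_const_mul_atTop_of_pos hsC).mpr hsqrtT
      exact hsqrtT.comp inner
    have hbndT : Tendsto (fun r : ℝ => lapBnd C δ r) atTop atTop := by
      apply haT.atTop_mul_atTop₀
      apply tendsto_atTop_add_const_right
      apply Tendsto.atTop_div_const hsC
      exact (tendsto_const_mul_atTop_of_pos hδ).mpr hsqrtT
    have hmem : ∀ᶠ r : ℝ in atTop, v ∈ Ioo (-(lapA C r)) (lapBnd C δ r) := by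
      filter_upwards [haT.eventually_gt_atTop |v|, hbndT.eventually_gt_atTop v] with r h1 h2
      exact ⟨by linarith [neg_abs_le v, le_abs_self v], h2⟩
    have hlim1 : Tendsto (fun r : ℝ => 1 + v / lapA C r) atTop (𝓝 1) := by
      have h0 : Tendsto (fun r : ℝ => v / lapA C r) atTop (𝓝 0) :=
        Tendsto.div_atTop tendsto_const_nhds haT
      have h1 := (tendsto_const_nhds (x := (1:ℝ))).add h0
      simpa using h1
    have hlimh : Tendsto (fun r : ℝ => lapH C b r v) atTop (𝓝 (Real.exp (-(v ^ 2)))) := by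
      have t1 : Tendsto (fun r : ℝ => (1 + v / lapA C r) ^ b) atTop (𝓝 1) := by
        have h1 := hlim1.rpow_const (p := b) (Or.inl one_ne_zero)
        simpa using h1
      have t2 : Tendsto (fun r : ℝ => Real.exp (-(v ^ 2) / (1 + v / lapA C r))) atTop
          (𝓝 (Real.exp (-(v ^ 2)))) := by
        have hdiv : Tendsto (fun r : ℝ => -(v ^ 2) / (1 + v / lapA C r)) atTop
            (𝓝 (-(v ^ 2))) := by
          have h1 := Tendsto.div (tendsto_const_nhds (x := -(v ^ 2))) hlim1 one_ne_zero
          rw [div_one] at h1; exact h1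
        exact (Real.continuous_exp.tendsto _).comp hdiv
      have h3 := t1.mul t2
      rw [one_mul] at h3
      exact h3
    refine Tendsto.congr' ?_ hlimh
    filter_upwards [hmem] with r hr
    rw [lapF, indicator_of_mem hr]

/-- Laplace-method asymptotics: for `C > 0`, `δ > 0`, `b ∈ ℝ`,
`∫₀^δ e^{-rt} t^b e^{-C/t} dt ∼ √(π C^{(2b+1)/2}) r^{(-2b-3)/4} e^{-√(4Cr)}` as `r → ∞`. -/
theorem laplace_asymptotic (C δ b : ℝ) (hC : 0 < C) (hδ : 0 < δ) :
    Tendsto (fun r : ℝ =>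
        (∫ t in Ioo (0:ℝ) δ, Real.exp (-r * t) * t ^ b * Real.exp (-C / t)) /
          (Real.sqrt (π * C ^ ((2 * b + 1) / 2)) * r ^ ((-2 * b - 3) / 4) *
            Real.exp (-Real.sqrt (4 * C * r))))
      atTop (nhds 1) := by
  have hkey : ∀ᶠ r : ℝ in atTop,
      (∫ v, lapF C δ b r v) / Real.sqrt π =
      (∫ t in Ioo (0:ℝ) δ, Real.exp (-r * t) * t ^ b * Real.exp (-C / t)) /
        (Real.sqrt (π * C ^ ((2 * b + 1) / 2)) * r ^ ((-2 * b - 3) / 4) *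
          Real.exp (-Real.sqrt (4 * C * r))) := by
    filter_upwards [eventually_gt_atTop 0] with r hr
    rw [key_id C δ b hC hδ r hr]
    congr 1
    have h1 : (∫ v, lapF C δ b r v)
        = ∫ v in Ioo (-(lapA C r)) (lapBnd C δ r), lapH C b r v := by
      simp only [lapF]
      exact integral_indicator measurableSet_Ioo
    rw [h1]
    simp only [lapA, lapBnd, lapH]
  have h2 : Tendsto (fun r : ℝ => (∫ v, lapF C δ b r v) / Real.sqrt π) atTop
      (𝓝 (Real.sqrt π / Real.sqrt π)) := (lap_dct C δ b hC hδ).div_const _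
  rw [div_self (Real.sqrt_pos.mpr pi_pos).ne'] at h2
  exact h2.congr' hkey
end

section
/- Suppose F_τ(t) ∼ A t^m e^{-C/t} and F_τ^{(k)}(t) ∼ B t^n e^{-C_k/t} as t → 0⁺, with A, B > 0, C_k > C > 0, m, n ∈ ℝ, and σ is uniformly distributed on [0, 2/r], independent of τ. Then P(κ = k | τ < σ) ∼ (B/A)·(C/C_k)·(r/2)^{m-n}·e^{-(C_k - C)r/2} as r → ∞. -/
open MeasureTheory ProbabilityTheory Real Filter Set Topology

open scoped ENNReal

namespace CondHitAux

/-- The comparison density, extended by `0` for `s ≤ 0`. -/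
noncomputable def Phi (A C m : ℝ) (s : ℝ) : ℝ :=
  if s ≤ 0 then 0 else A * s ^ m * Real.exp (-C / s)

lemma Phi_of_pos {A C m s : ℝ} (hs : 0 < s) :
    Phi A C m s = A * s ^ m * Real.exp (-C / s) := by
  simp [Phi, not_le.2 hs]

lemma Phi_pos {A C m s : ℝ} (hA : 0 < A) (hs : 0 < s) : 0 < Phi A C m s := by
  rw [Phi_of_pos hs]
  positivity

lemma tendsto_rpow_exp_zero (a C : ℝ) (hC : 0 < C) :
    Tendsto (fun t : ℝ => t ^ a * Real.exp (-C / t)) (𝓝[>] (0:ℝ)) (𝓝 0) := by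
  have h1 : Tendsto (fun x : ℝ => x ^ (-a) * Real.exp (-C * x)) atTop (𝓝 0) :=
    tendsto_rpow_mul_exp_neg_mul_atTop_nhds_zero (-a) C hC
  have h2 := h1.comp tendsto_inv_nhdsGT_zero
  refine h2.congr' ?_
  filter_upwards [self_mem_nhdsWithin] with t (ht : 0 < t)
  simp only [Function.comp]
  rw [Real.inv_rpow ht.le, Real.rpow_neg ht.le, inv_inv, neg_mul, ← div_eq_mul_inv, neg_div]

lemma continuous_Phi (A C m : ℝ) (hC : 0 < C) : Continuous (Phi A C m) := by
  rw [continuous_iff_continuousAt]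
  intro x
  rcases lt_trichotomy x 0 with hx | hx | hx
  · have h : ∀ᶠ y in 𝓝 x, (0:ℝ) = Phi A C m y := by
      filter_upwards [eventually_lt_nhds hx] with y hy
      simp [Phi, hy.le]
    exact continuousAt_const.congr h
  · subst hx
    have h0 : Phi A C m 0 = 0 := by simp [Phi]
    rw [ContinuousAt, h0]
    conv_lhs => rw [← nhdsLE_sup_nhdsGT (0:ℝ)]
    rw [tendsto_sup]
    constructor
    · refine Tendsto.congr' ?_ tendsto_const_nhds
      filter_upwards [self_mem_nhdsWithin] with y (hy : y ≤ 0)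
      simp [Phi, hy]
    · have := (tendsto_rpow_exp_zero m C hC).const_mul A
      rw [mul_zero] at this
      refine this.congr' ?_
      filter_upwards [self_mem_nhdsWithin] with y (hy : 0 < y)
      rw [Phi_of_pos hy, mul_assoc]
  · have hcont : ContinuousAt (fun y : ℝ => A * y ^ m * Real.exp (-C / y)) x := by
      have h1 : ContinuousAt (fun y : ℝ => y ^ m) x :=
        Real.continuousAt_rpow_const x m (Or.inl hx.ne')
      have h2 : ContinuousAt (fun y : ℝ => Real.exp (-C / y)) x :=
        Real.continuous_exp.continuousAt.comp
          ((continuousAt_const.div continuousAt_id hx.ne'))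
      exact ((continuousAt_const.mul h1).mul h2)
    refine hcont.congr ?_
    filter_upwards [eventually_gt_nhds hx] with y hy
    rw [Phi_of_pos hy]

/-- The explicit primitive-scale function. -/
noncomputable def Dfun (A C m : ℝ) (ε : ℝ) : ℝ := A / C * ε ^ (m + 2) * Real.exp (-C / ε)

lemma hasDerivAt_Dfun {A C m ε : ℝ} (hC : 0 < C) (hε : 0 < ε) :
    HasDerivAt (Dfun A C m) (Phi A C m ε * (1 + (m + 2) * ε / C)) ε := by
  have h1 : HasDerivAt (fun y : ℝ => y ^ (m + 2)) ((m + 2) * ε ^ (m + 2 - 1)) ε :=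
    Real.hasDerivAt_rpow_const (Or.inl hε.ne')
  have h2 : HasDerivAt (fun y : ℝ => -C / y) (-C * -(ε ^ 2)⁻¹) ε := by
    simpa [div_eq_mul_inv] using (hasDerivAt_inv hε.ne').const_mul (-C)
  have h3 : HasDerivAt (fun y : ℝ => Real.exp (-C / y)) (Real.exp (-C / ε) * (-C * -(ε ^ 2)⁻¹)) ε :=
    h2.exp
  have h4 := ((h1.const_mul (A / C)).mul h3)
  have key : A / C * ((m + 2) * ε ^ (m + 2 - 1)) * Real.exp (-C / ε) +
      A / C * ε ^ (m + 2) * (Real.exp (-C / ε) * (-C * -(ε ^ 2)⁻¹)) =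
      Phi A C m ε * (1 + (m + 2) * ε / C) := by
    rw [Phi_of_pos hε]
    have e1 : ε ^ (m + 2 - 1) = ε ^ m * ε := by
      rw [show m + 2 - 1 = m + 1 by ring, Real.rpow_add hε, Real.rpow_one]
    have e2 : ε ^ (m + 2) = ε ^ m * ε ^ 2 := by
      rw [Real.rpow_add hε]
      norm_num [Real.rpow_natCast]
    rw [e1, e2]
    have hε2 : (ε:ℝ) ^ 2 ≠ 0 := pow_ne_zero 2 hε.ne'
    field_simp
    ring
  rw [← key]
  exact h4.congr_deriv rfl

lemma tendsto_Dfun_zero {A C m : ℝ} (hC : 0 < C) :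
    Tendsto (Dfun A C m) (𝓝[>] (0:ℝ)) (𝓝 0) := by
  have := (tendsto_rpow_exp_zero (m + 2) C hC).const_mul (A / C)
  rw [mul_zero] at this
  refine this.congr fun ε => ?_
  rw [Dfun, mul_assoc]

lemma watson_phi {A C m : ℝ} (hA : 0 < A) (hC : 0 < C) :
    Tendsto (fun ε => (∫ s in (0:ℝ)..ε, Phi A C m s) / Dfun A C m ε) (𝓝[>] (0:ℝ)) (𝓝 1) := by
  have hPhiCont := continuous_Phi A C m hC
  have hN : ∀ ε : ℝ, HasDerivAt (fun u => ∫ s in (0:ℝ)..u, Phi A C m s) (Phi A C m ε) ε :=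
    fun ε => intervalIntegral.integral_hasDerivAt_right
      (hPhiCont.intervalIntegrable _ _)
      (hPhiCont.stronglyMeasurable.stronglyMeasurableAtFilter)
      hPhiCont.continuousAt
  have hw : Tendsto (fun ε : ℝ => 1 + (m + 2) * ε / C) (𝓝[>] (0:ℝ)) (𝓝 1) := by
    have : Continuous (fun ε : ℝ => 1 + (m + 2) * ε / C) := by continuity
    have h := this.continuousAt (x := (0:ℝ))
    rw [ContinuousAt] at h
    simpa using h.mono_left nhdsWithin_le_nhds
  have hwpos : ∀ᶠ ε in 𝓝[>] (0:ℝ), 0 < 1 + (m + 2) * ε / C :=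
    hw.eventually (eventually_gt_nhds one_pos) |>.mono fun ε h => by linarith [h]
  refine HasDerivAt.lhopital_zero_nhdsGT
    (f := fun u => ∫ s in (0:ℝ)..u, Phi A C m s) (g := Dfun A C m)
    (f' := fun ε => Phi A C m ε) (g' := fun ε => Phi A C m ε * (1 + (m + 2) * ε / C))
    ?_ ?_ ?_ ?_ ?_ ?_
  · exact Eventually.of_forall fun ε => hN ε
  · filter_upwards [self_mem_nhdsWithin] with ε (hε : 0 < ε)
    exact hasDerivAt_Dfun hC hε
  · filter_upwards [self_mem_nhdsWithin, hwpos] with ε (hε : 0 < ε) hwp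
    exact mul_ne_zero (Phi_pos hA hε).ne' hwp.ne'
  · have hcont : Continuous (fun u => ∫ s in (0:ℝ)..u, Phi A C m s) := by
      rw [continuous_iff_continuousAt]; exact fun ε => (hN ε).continuousAt
    have h0 : (∫ s in (0:ℝ)..(0:ℝ), Phi A C m s) = 0 := intervalIntegral.integral_same
    have := hcont.continuousAt (x := (0:ℝ))
    rw [ContinuousAt, h0] at this
    exact this.mono_left nhdsWithin_le_nhds
  · exact tendsto_Dfun_zero hC
  · have : Tendsto (fun ε : ℝ => (1 + (m + 2) * ε / C)⁻¹) (𝓝[>] (0:ℝ)) (𝓝 1) := by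
      simpa using hw.inv₀ one_ne_zero
    refine this.congr' ?_
    filter_upwards [self_mem_nhdsWithin, hwpos] with ε (hε : 0 < ε) hwp
    have hP := (Phi_pos (C := C) (m := m) hA hε).ne'
    rw [eq_comm]
    field_simp

lemma watson_general {A C m : ℝ} (hA : 0 < A) (hC : 0 < C) (f : ℝ → ℝ)
    (hmono : Monotone f) (hf0 : f 0 = 0)
    (hasymp : Tendsto (fun s => f s / (A * s ^ m * Real.exp (-C / s))) (𝓝[>] (0:ℝ)) (𝓝 1)) :
    Tendsto (fun ε => (∫ s in (0:ℝ)..ε, f s) / Dfun A C m ε) (𝓝[>] (0:ℝ)) (𝓝 1) := by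
  have hPhiCont := continuous_Phi A C m hC
  have hIpos : ∀ ε : ℝ, 0 < ε → 0 < ∫ s in (0:ℝ)..ε, Phi A C m s := fun ε hε =>
    intervalIntegral.intervalIntegral_pos_of_pos_on (hPhiCont.intervalIntegrable _ _)
      (fun x hx => Phi_pos hA hx.1) hε
  -- ratio of integrals tends to 1
  have key : Tendsto (fun ε => (∫ s in (0:ℝ)..ε, f s) / ∫ s in (0:ℝ)..ε, Phi A C m s)
      (𝓝[>] (0:ℝ)) (𝓝 1) := by
    rw [Metric.tendsto_nhds]
    intro δ hδ
    have hev : ∀ᶠ s in 𝓝[>] (0:ℝ),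
        |f s / (A * s ^ m * Real.exp (-C / s)) - 1| < δ / 2 := by
      have := Metric.tendsto_nhds.1 hasymp (δ / 2) (by linarith)
      simpa [Real.dist_eq] using this
    rw [eventually_iff_exists_mem] at hev
    obtain ⟨v, hv, hvP⟩ := hev
    rw [mem_nhdsGT_iff_exists_Ioo_subset] at hv
    obtain ⟨u, hu, huv⟩ := hv
    have hu0 : (0:ℝ) < u := by simpa using hu
    filter_upwards [Ioo_mem_nhdsGT_of_mem (by exact ⟨le_refl _, hu0⟩ : (0:ℝ) ∈ Ico 0 u)]
      with ε hε
    obtain ⟨hε0, hεu⟩ := hε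
    have bound : ∀ s ∈ Set.Ioc (0:ℝ) ε,
        (1 - δ/2) * Phi A C m s ≤ f s ∧ f s ≤ (1 + δ/2) * Phi A C m s := by
      intro s hs
      have hs0 : 0 < s := hs.1
      have hsu : s ∈ Set.Ioo (0:ℝ) u := ⟨hs0, lt_of_le_of_lt hs.2 hεu⟩
      have hb := hvP s (huv hsu)
      have hP : 0 < Phi A C m s := Phi_pos hA hs0
      rw [Phi_of_pos hs0] at hP ⊢
      rw [abs_sub_lt_iff] at hb
      constructor
      · have h2 : 1 - δ/2 < f s / (A * s ^ m * Real.exp (-C / s)) := by linarith [hb.2]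
        calc (1 - δ/2) * (A * s ^ m * Real.exp (-C / s))
            ≤ f s / (A * s ^ m * Real.exp (-C / s)) * (A * s ^ m * Real.exp (-C / s)) :=
              mul_le_mul_of_nonneg_right h2.le hP.le
          _ = f s := by field_simp
      · have h2 := hb.1
        have : f s / (A * s ^ m * Real.exp (-C / s)) < 1 + δ/2 := by linarith
        calc f s = f s / (A * s ^ m * Real.exp (-C / s)) * (A * s ^ m * Real.exp (-C / s)) := by
              field_simp
          _ ≤ (1 + δ/2) * (A * s ^ m * Real.exp (-C / s)) := by
              apply mul_le_mul_of_nonneg_right this.le hP.le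
    -- integrability of f
    have hfint : IntervalIntegrable f volume 0 ε := hmono.intervalIntegrable
    have hlow : (1 - δ/2) * (∫ s in (0:ℝ)..ε, Phi A C m s) ≤ ∫ s in (0:ℝ)..ε, f s := by
      rw [← intervalIntegral.integral_const_mul]
      apply intervalIntegral.integral_mono_on hε0.le
        ((hPhiCont.intervalIntegrable _ _).const_mul _) hfint
      intro x hx
      rcases eq_or_lt_of_le hx.1 with h | h
      · simp [← h, hf0, Phi, le_refl]
      · exact (bound x ⟨h, hx.2⟩).1
    have hhigh : (∫ s in (0:ℝ)..ε, f s) ≤ (1 + δ/2) * ∫ s in (0:ℝ)..ε, Phi A C m s := by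
      rw [← intervalIntegral.integral_const_mul]
      apply intervalIntegral.integral_mono_on hε0.le hfint
        ((hPhiCont.intervalIntegrable _ _).const_mul _)
      intro x hx
      rcases eq_or_lt_of_le hx.1 with h | h
      · simp [← h, hf0, Phi, le_refl]
      · exact (bound x ⟨h, hx.2⟩).2
    have hIp := hIpos ε hε0
    rw [Real.dist_eq, abs_sub_lt_iff]
    constructor
    · rw [sub_lt_iff_lt_add]
      calc (∫ s in (0:ℝ)..ε, f s) / ∫ s in (0:ℝ)..ε, Phi A C m s
          ≤ 1 + δ/2 := by rw [div_le_iff₀ hIp]; linarith [hhigh]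
        _ < δ + 1 := by linarith
    · rw [sub_lt_iff_lt_add]
      have : 1 - δ/2 ≤ (∫ s in (0:ℝ)..ε, f s) / ∫ s in (0:ℝ)..ε, Phi A C m s := by
        rw [le_div_iff₀ hIp]; linarith [hlow]
      linarith
  have hprod := key.mul (watson_phi hA hC (m := m))
  rw [mul_one] at hprod
  refine hprod.congr' ?_
  filter_upwards [self_mem_nhdsWithin] with ε (hε : 0 < ε)
  rw [div_mul_div_cancel₀ (hIpos ε hε).ne']

variable {Ω : Type*} [MeasurableSpace Ω]

lemma rep_lemma (μ : Measure Ω) [IsProbabilityMeasure μ]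
    (τ : Ω → ℝ) (κ : Ω → ℕ) (hτ : Measurable τ) (hκ : Measurable κ)
    (σ : Ω → ℝ) (hσm : Measurable σ) (r : ℝ) (hr : 0 < r)
    (hdist : Measure.map σ μ = ENNReal.ofReal (r / 2) • volume.restrict (Icc (0:ℝ) (2 / r)))
    (hind : IndepFun (fun ω => (τ ω, κ ω)) σ μ)
    (S : Set (ℝ × ℕ)) (hS : MeasurableSet S) :
    (μ {ω | (τ ω, κ ω) ∈ S ∧ τ ω < σ ω}).toReal
      = r / 2 * ∫ s in (0:ℝ)..(2 / r), (μ {ω | (τ ω, κ ω) ∈ S ∧ τ ω ≤ s}).toReal := by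
  set X : Ω → ℝ × ℕ := fun ω => (τ ω, κ ω) with hX_def
  have hX : Measurable X := hτ.prodMk hκ
  haveI : IsProbabilityMeasure (μ.map X) := Measure.isProbabilityMeasure_map hX.aemeasurable
  haveI : IsProbabilityMeasure (μ.map σ) := Measure.isProbabilityMeasure_map hσm.aemeasurable
  have hmap : μ.map (fun ω => (X ω, σ ω)) = (μ.map X).prod (μ.map σ) :=
    (ProbabilityTheory.indepFun_iff_map_prod_eq_prod_map_map hX.aemeasurable
      hσm.aemeasurable).1 hind
  set T : Set ((ℝ × ℕ) × ℝ) := {p | p.1 ∈ S ∧ p.1.1 < p.2} with hT_def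
  have hT : MeasurableSet T := by
    apply MeasurableSet.inter
    · exact measurable_fst hS
    · exact measurableSet_lt (measurable_fst.fst) measurable_snd
  have h1 : μ {ω | (τ ω, κ ω) ∈ S ∧ τ ω < σ ω} = ((μ.map X).prod (μ.map σ)) T := by
    rw [← hmap, Measure.map_apply (hX.prodMk hσm) hT]
    rfl
  have h2 : ((μ.map X).prod (μ.map σ)) T
      = ∫⁻ s, μ {ω | (τ ω, κ ω) ∈ S ∧ τ ω < s} ∂(μ.map σ) := by
    rw [Measure.prod_apply_symm hT]
    congr 1
    ext s
    rw [show (fun x => (x, s)) ⁻¹' T = S ∩ {x : ℝ × ℕ | x.1 < s} from rfl,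
      Measure.map_apply hX (hS.inter (measurableSet_lt measurable_fst measurable_const))]
    rfl
  -- the ENNReal-valued cumulative function
  set g : ℝ → ℝ≥0∞ := fun s => μ {ω | (τ ω, κ ω) ∈ S ∧ τ ω < s} with hg_def
  have hgmono : Monotone g := by
    intro s t hst
    exact measure_mono fun ω hω => ⟨hω.1, lt_of_lt_of_le hω.2 hst⟩
  have hgmeas : Measurable g := hgmono.measurable
  have h3 : ∫⁻ s, g s ∂(μ.map σ)
      = ENNReal.ofReal (r / 2) * ∫⁻ s in Icc (0:ℝ) (2 / r), g s := by
    rw [hdist, lintegral_smul_measure, smul_eq_mul]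
  have h4 : (∫⁻ s in Icc (0:ℝ) (2 / r), g s).toReal
      = ∫ s in Icc (0:ℝ) (2 / r), (g s).toReal := by
    rw [integral_toReal (hgmeas.aemeasurable) (Eventually.of_forall fun s => measure_lt_top μ _)]
  -- a.e. equality with the closed cumulative function
  have hcount : ({t : ℝ | μ {a | t ≤ τ a} ≠ μ {a | t < τ a}} : Set ℝ).Countable :=
    countable_meas_le_ne_meas_lt μ τ
  have hae : ∀ᵐ s ∂(volume.restrict (Icc (0:ℝ) (2 / r))),
      (g s).toReal = (μ {ω | (τ ω, κ ω) ∈ S ∧ τ ω ≤ s}).toReal := by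
    apply ae_restrict_of_ae
    have hnull : (volume : Measure ℝ) {t : ℝ | μ {a | t ≤ τ a} ≠ μ {a | t < τ a}} = 0 :=
      hcount.measure_zero _
    rw [ae_iff]
    apply measure_mono_null _ hnull
    intro s hs
    simp only [mem_setOf_eq] at hs ⊢
    intro hmeq
    apply hs
    have hatom : μ {ω | τ ω = s} = 0 := by
      have hdisj : Disjoint {ω | s < τ ω} {ω | τ ω = s} := by
        rw [Set.disjoint_left]
        rintro ω (hω : s < τ ω) (hω' : τ ω = s)
        exact absurd hω' (ne_of_gt hω)
      have hsplit : μ {ω | s ≤ τ ω} = μ {ω | s < τ ω} + μ {ω | τ ω = s} := by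
        rw [← measure_union hdisj (hτ (measurableSet_singleton s))]
        congr 1
        ext ω
        simp only [mem_union, mem_setOf_eq]
        constructor
        · intro h
          rcases lt_or_eq_of_le h with h' | h'
          · exact Or.inl h'
          · exact Or.inr h'.symm
        · rintro (h | h)
          exacts [h.le, h.ge]
      rw [hmeq] at hsplit
      have h0 : μ {a | s < τ a} + μ {ω | τ ω = s} = μ {a | s < τ a} + 0 := by
        rw [add_zero]; exact hsplit.symm
      exact (ENNReal.add_right_inj (measure_ne_top μ _)).1 h0
    have heq : μ {ω | (τ ω, κ ω) ∈ S ∧ τ ω < s} = μ {ω | (τ ω, κ ω) ∈ S ∧ τ ω ≤ s} := by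
      apply le_antisymm
      · exact measure_mono fun ω hω => ⟨hω.1, hω.2.le⟩
      · calc μ {ω | (τ ω, κ ω) ∈ S ∧ τ ω ≤ s}
            ≤ μ ({ω | (τ ω, κ ω) ∈ S ∧ τ ω < s} ∪ {ω | τ ω = s}) := by
              apply measure_mono
              intro ω hω
              rcases lt_or_eq_of_le hω.2 with h | h
              · exact Or.inl ⟨hω.1, h⟩
              · exact Or.inr h
          _ ≤ μ {ω | (τ ω, κ ω) ∈ S ∧ τ ω < s} + μ {ω | τ ω = s} := measure_union_le _ _
          _ = μ {ω | (τ ω, κ ω) ∈ S ∧ τ ω < s} := by rw [hatom, add_zero]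
    rw [hg_def]
    simp only []
    rw [heq]
  have h5 : ∫ s in Icc (0:ℝ) (2 / r), (g s).toReal
      = ∫ s in Icc (0:ℝ) (2 / r), (μ {ω | (τ ω, κ ω) ∈ S ∧ τ ω ≤ s}).toReal :=
    integral_congr_ae hae
  have h6 : ∫ s in Icc (0:ℝ) (2 / r), (μ {ω | (τ ω, κ ω) ∈ S ∧ τ ω ≤ s}).toReal
      = ∫ s in (0:ℝ)..(2 / r), (μ {ω | (τ ω, κ ω) ∈ S ∧ τ ω ≤ s}).toReal := by
    rw [MeasureTheory.integral_Icc_eq_integral_Ioc,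
      intervalIntegral.integral_of_le (by positivity : (0:ℝ) ≤ 2 / r)]
  rw [h1, h2, h3, ENNReal.toReal_mul, ENNReal.toReal_ofReal (by positivity), h4, h5, h6]

end CondHitAux

open CondHitAux

/-- Conditional hitting probability asymptotics under uniform resetting on `[0, 2/r]`:
if `F_τ(t) ∼ A t^m e^{-C/t}` and `F_τ^{(k)}(t) ∼ B t^n e^{-C_k/t}` as `t → 0⁺`, then
`P(κ = k | τ < σ_r) ∼ (B/A)(C/C_k)(r/2)^{m-n} e^{-(C_k-C)r/2}` as `r → ∞`. -/
theorem conditional_hitting_uniform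
    {Ω : Type*} [MeasurableSpace Ω] (μ : Measure Ω) [IsProbabilityMeasure μ]
    (τ : Ω → ℝ) (κ : Ω → ℕ) (k : ℕ) (σ : ℝ → Ω → ℝ)
    (hτ : Measurable τ) (hκ : Measurable κ) (hσ : ∀ r, Measurable (σ r))
    (hτpos : ∀ᵐ ω ∂μ, 0 < τ ω)
    (A B C Ck m n : ℝ)
    (hA : 0 < A) (hB : 0 < B) (hC : 0 < C) (hCk : C < Ck)
    (hdist : ∀ r > 0, Measure.map (σ r) μ =
      ENNReal.ofReal (r / 2) • volume.restrict (Icc (0:ℝ) (2 / r)))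
    (hindep : ∀ r > 0, IndepFun (fun ω => (τ ω, κ ω)) (σ r) μ)
    (hF : Tendsto (fun t => (μ {ω | τ ω ≤ t}).toReal /
        (A * t ^ m * Real.exp (-C / t))) (𝓝[>] 0) (𝓝 1))
    (hFk : Tendsto (fun t => (μ {ω | τ ω ≤ t ∧ κ ω = k}).toReal /
        (B * t ^ n * Real.exp (-Ck / t))) (𝓝[>] 0) (𝓝 1))
    (hppos : ∀ r > 0, 0 < (μ {ω | τ ω < σ r ω}).toReal)
    (hpkpos : ∀ r > 0, 0 < (μ {ω | κ ω = k ∧ τ ω < σ r ω}).toReal) :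
    Tendsto (fun r : ℝ =>
        ((μ {ω | κ ω = k ∧ τ ω < σ r ω}).toReal / (μ {ω | τ ω < σ r ω}).toReal) /
          (B / A * (C / Ck) * (r / 2) ^ (m - n) * Real.exp (-(Ck - C) * r / 2)))
      atTop (𝓝 1) := by
  have hCk0 : 0 < Ck := hC.trans hCk
  set f : ℝ → ℝ := fun s => (μ {ω | τ ω ≤ s}).toReal with hf_def
  set fk : ℝ → ℝ := fun s => (μ {ω | τ ω ≤ s ∧ κ ω = k}).toReal with hfk_def
  have hfmono : Monotone f := fun s t hst => ENNReal.toReal_mono (measure_ne_top μ _)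
    (measure_mono fun ω hω => le_trans hω hst)
  have hfkmono : Monotone fk := fun s t hst => ENNReal.toReal_mono (measure_ne_top μ _)
    (measure_mono fun ω hω => ⟨le_trans hω.1 hst, hω.2⟩)
  have hnull0 : μ {ω | ¬ (0 < τ ω)} = 0 := ae_iff.1 hτpos
  have hf0 : f 0 = 0 := by
    have h : μ {ω | τ ω ≤ 0} = 0 :=
      measure_mono_null (fun ω (hω : τ ω ≤ 0) => not_lt.2 hω) hnull0
    simp [hf_def, h]
  have hfk0 : fk 0 = 0 := by
    have h : μ {ω | τ ω ≤ 0 ∧ κ ω = k} = 0 :=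
      measure_mono_null (fun ω hω => not_lt.2 hω.1) hnull0
    simp [hfk_def, h]
  -- representations
  have hrep : ∀ r > 0, (μ {ω | τ ω < σ r ω}).toReal
      = r / 2 * ∫ s in (0:ℝ)..(2 / r), f s := by
    intro r hr
    have h := rep_lemma μ τ κ hτ hκ (σ r) (hσ r) r hr (hdist r hr) (hindep r hr)
      Set.univ MeasurableSet.univ
    have e0 : {ω | (τ ω, κ ω) ∈ (Set.univ : Set (ℝ × ℕ)) ∧ τ ω < σ r ω}
        = {ω | τ ω < σ r ω} := by ext ω; simp
    have e1 : ∀ s : ℝ, {ω | (τ ω, κ ω) ∈ (Set.univ : Set (ℝ × ℕ)) ∧ τ ω ≤ s}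
        = {ω | τ ω ≤ s} := by intro s; ext ω; simp
    rw [e0] at h
    rw [h]
    congr 1
    apply intervalIntegral.integral_congr
    intro s _
    beta_reduce
    rw [e1 s]
  have hrepk : ∀ r > 0, (μ {ω | κ ω = k ∧ τ ω < σ r ω}).toReal
      = r / 2 * ∫ s in (0:ℝ)..(2 / r), fk s := by
    intro r hr
    have h := rep_lemma μ τ κ hτ hκ (σ r) (hσ r) r hr (hdist r hr) (hindep r hr)
      {x : ℝ × ℕ | x.2 = k} (measurable_snd (measurableSet_singleton k))
    have e0 : {ω | (τ ω, κ ω) ∈ {x : ℝ × ℕ | x.2 = k} ∧ τ ω < σ r ω}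
        = {ω | κ ω = k ∧ τ ω < σ r ω} := rfl
    have e1 : ∀ s : ℝ, {ω | (τ ω, κ ω) ∈ {x : ℝ × ℕ | x.2 = k} ∧ τ ω ≤ s}
        = {ω | τ ω ≤ s ∧ κ ω = k} := by
      intro s; ext ω; simp only [mem_setOf_eq]; exact and_comm
    rw [e0] at h
    rw [h]
    congr 1
    apply intervalIntegral.integral_congr
    intro s _
    beta_reduce
    rw [e1 s]
  -- Watson asymptotics
  have hG := watson_general hA hC f hfmono hf0 hF
  have hGk := watson_general hB hCk0 fk hfkmono hfk0 hFk
  -- composition with r ↦ 2 / r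
  have hcomp : Tendsto (fun r : ℝ => 2 / r) atTop (𝓝[>] (0:ℝ)) := by
    rw [tendsto_nhdsWithin_iff]
    constructor
    · have := tendsto_inv_atTop_zero (𝕜 := ℝ) |>.const_mul (2:ℝ)
      rw [mul_zero] at this
      exact this.congr fun r => (div_eq_mul_inv 2 r).symm
    · filter_upwards [eventually_gt_atTop (0:ℝ)] with r hr
      exact div_pos two_pos hr
  have T1 := hGk.comp hcomp
  have T2 := (hG.comp hcomp).inv₀ one_ne_zero
  rw [inv_one] at T2
  have hlim := T1.mul T2
  rw [mul_one] at hlim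
  refine hlim.congr' ?_
  filter_upwards [eventually_gt_atTop (0:ℝ)] with r hr
  have hε : (0:ℝ) < 2 / r := by positivity
  have hr2 : (0:ℝ) < r / 2 := by positivity
  -- the scale identity
  have hE : B / A * (C / Ck) * (r / 2) ^ (m - n) * Real.exp (-(Ck - C) * r / 2)
      = Dfun B Ck n (2 / r) / Dfun A C m (2 / r) := by
    have h1 : ((2:ℝ) / r) ^ (n + 2) = (2 / r) ^ (n - m) * (2 / r) ^ (m + 2) := by
      rw [← Real.rpow_add hε]; ring_nf
    have h3 : ((2:ℝ) / r) ^ (n - m) = (r / 2) ^ (m - n) := by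
      calc ((2:ℝ) / r) ^ (n - m) = ((r / 2)⁻¹) ^ (n - m) := by rw [inv_div]
        _ = ((r / 2) ^ (n - m))⁻¹ := Real.inv_rpow hr2.le _
        _ = (r / 2) ^ (-(n - m)) := (Real.rpow_neg hr2.le _).symm
        _ = (r / 2) ^ (m - n) := by rw [neg_sub]
    have h2 : Real.exp (-Ck / (2 / r)) =
        Real.exp (-(Ck - C) * r / 2) * Real.exp (-C / (2 / r)) := by
      rw [← Real.exp_add]
      congr 1
      field_simp
      ring
    rw [Dfun, Dfun, h1, h3, h2]
    have hX : (0:ℝ) < (2 / r) ^ (m + 2) := Real.rpow_pos_of_pos hε _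
    have hEx : (0:ℝ) < Real.exp (-C / (2 / r)) := Real.exp_pos _
    field_simp
  simp only [Function.comp]
  rw [hrep r hr, hrepk r hr, hE,
    mul_div_mul_left _ _ (ne_of_gt hr2), div_div_div_comm, div_eq_mul_inv]
  exact (div_eq_mul_inv _ _).symm
end

section
/- Suppose F_τ(t) ∼ A t^m and F_τ^{(k)}(t) ∼ B t^n as t → 0⁺ with A, B > 0 and 0 < m ≤ n, and σ is gamma distributed with shape η > 0 and rate r > 0, independent of τ. Then P(κ = k | τ < σ) ∼ (B/A) · (Γ(n+η)/Γ(m+η)) · r^{m-n} as r → ∞. -/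
open MeasureTheory ProbabilityTheory Real Filter Set Topology
open scoped ENNReal NNReal

section Auxiliary

lemma countable_jumps_CHPG {Ω : Type*} [MeasurableSpace Ω] (μ : Measure Ω) (g : Ω → ℝ) :
    {t : ℝ | μ {a | g a ≤ t} ≠ μ {a | g a < t}}.Countable := by
  have h := MeasureTheory.countable_meas_le_ne_meas_lt (R := ℝᵒᵈ) μ
    (fun a => OrderDual.toDual (g a))
  refine (h.image OrderDual.ofDual).mono (fun t ht => ?_)
  exact ⟨OrderDual.toDual t, ht, rfl⟩

lemma rep1_CHPG {Ω : Type*} [MeasurableSpace Ω] (μ : Measure Ω) [IsProbabilityMeasure μ]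
    (τ : Ω → ℝ) (κ : Ω → ℕ) (hτ : Measurable τ) (hκ : Measurable κ)
    (σ' : Ω → ℝ) (hσ : Measurable σ') {η r : ℝ} (hη : 0 < η) (hr : 0 < r)
    (hdist : Measure.map σ' μ = gammaMeasure η r)
    (hindep : IndepFun (fun ω => (τ ω, κ ω)) σ' μ)
    {S : Set (ℝ × ℕ)} (hS : MeasurableSet S) :
    μ {ω | (τ ω, κ ω) ∈ S ∧ τ ω < σ' ω}
      = ∫⁻ s, μ {ω | (τ ω, κ ω) ∈ S ∧ τ ω ≤ s} ∂(gammaMeasure η r) := by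
  have hγ : IsProbabilityMeasure (gammaMeasure η r) := isProbabilityMeasure_gammaMeasure hη hr
  have hpair : Measurable (fun ω => (τ ω, κ ω)) := hτ.prodMk hκ
  have hmap := (indepFun_iff_map_prod_eq_prod_map_map hpair.aemeasurable
    hσ.aemeasurable).mp hindep
  rw [hdist] at hmap
  set U : Set ((ℝ × ℕ) × ℝ) := {p | p.1 ∈ S ∧ p.1.1 < p.2} with hU_def
  have hU : MeasurableSet U := by
    apply (measurable_fst hS).inter
    exact measurableSet_lt (measurable_fst.fst) measurable_snd
  have e1 : μ {ω | (τ ω, κ ω) ∈ S ∧ τ ω < σ' ω}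
      = (μ.map (fun ω => ((τ ω, κ ω), σ' ω))) U := by
    rw [Measure.map_apply (hpair.prodMk hσ) hU]; rfl
  rw [e1, hmap, Measure.prod_apply_symm hU]
  have inner : ∀ s : ℝ, (μ.map (fun ω => (τ ω, κ ω))) ((fun x => (x, s)) ⁻¹' U)
      = μ {ω | (τ ω, κ ω) ∈ S ∧ τ ω < s} := by
    intro s
    have hpre : MeasurableSet ((fun x : ℝ × ℕ => (x, s)) ⁻¹' U) :=
      hU.preimage (measurable_id.prodMk measurable_const)
    rw [Measure.map_apply hpair hpre]; rfl
  simp_rw [inner]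
  refine lintegral_congr_ae ?_
  set T : Set Ω := (fun ω => (τ ω, κ ω)) ⁻¹' S with hT_def
  have hT : MeasurableSet T := hpair hS
  have hres : ∀ s : ℝ, μ {ω | (τ ω, κ ω) ∈ S ∧ τ ω < s} = (μ.restrict T) {ω | τ ω < s} := by
    intro s
    rw [Measure.restrict_apply (measurableSet_lt hτ measurable_const)]
    congr 1; ext ω; simp [hT_def, and_comm]
  have hres' : ∀ s : ℝ, μ {ω | (τ ω, κ ω) ∈ S ∧ τ ω ≤ s} = (μ.restrict T) {ω | τ ω ≤ s} := by
    intro s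
    rw [Measure.restrict_apply (measurableSet_le hτ measurable_const)]
    congr 1; ext ω; simp [hT_def, and_comm]
  have hcnt := countable_jumps_CHPG (μ.restrict T) τ
  have hnull : (gammaMeasure η r)
      {t : ℝ | (μ.restrict T) {a | τ a ≤ t} ≠ (μ.restrict T) {a | τ a < t}} = 0 :=
    withDensity_absolutelyContinuous volume _ (hcnt.measure_zero _)
  filter_upwards [measure_eq_zero_iff_ae_notMem.mp hnull] with s hs
  rw [hres, hres']
  exact (not_ne_iff.mp hs).symm

lemma rep2_CHPG {η r : ℝ} (hη : 0 < η) (hr : 0 < r) (w : ℝ → ℝ≥0∞)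
    (hw : Monotone w) (hw1 : ∀ s, w s ≤ 1) :
    (∫⁻ s, w s ∂(gammaMeasure η r)).toReal
      = (Real.Gamma η)⁻¹ * ∫ u in Ioi 0, (w (u / r)).toReal * u ^ (η - 1) * Real.exp (-u) := by
  have hwm : Measurable w := hw.measurable
  have hwt : ∀ s, ENNReal.ofReal ((w s).toReal) = w s := fun s =>
    ENNReal.ofReal_toReal ((hw1 s).trans_lt ENNReal.one_lt_top).ne
  have step1 : (∫⁻ s, w s ∂(gammaMeasure η r)).toReal
      = ∫ s, (w s).toReal * gammaPDFReal η r s := by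
    have hpdfm : Measurable (gammaPDF η r) := (measurable_gammaPDFReal η r).ennreal_ofReal
    rw [gammaMeasure, lintegral_withDensity_eq_lintegral_mul _ hpdfm hwm]
    rw [integral_eq_lintegral_of_nonneg_ae]
    · congr 1
      refine lintegral_congr (fun s => ?_)
      rw [ENNReal.ofReal_mul ENNReal.toReal_nonneg, hwt]
      simp [gammaPDF, mul_comm]
    · exact ae_of_all _ fun s => mul_nonneg ENNReal.toReal_nonneg (gammaPDFReal_nonneg hη hr s)
    · exact ((ENNReal.measurable_toReal.comp hwm).mul
        (measurable_gammaPDFReal η r)).aestronglyMeasurable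
  rw [step1]
  have step2 : ∫ s, (w s).toReal * gammaPDFReal η r s
      = ∫ s in Ioi 0, (w s).toReal * gammaPDFReal η r s := by
    rw [← integral_Ici_eq_integral_Ioi]
    refine (setIntegral_eq_integral_of_forall_compl_eq_zero (fun s hs => ?_)).symm
    have : s < 0 := by simpa using hs
    simp [gammaPDFReal, not_le.mpr this]
  rw [step2]
  set H : ℝ → ℝ := fun u => (w (u / r)).toReal * gammaPDFReal η r (u / r) with hH
  have step3 : ∫ s in Ioi 0, (w s).toReal * gammaPDFReal η r s = r⁻¹ * ∫ u in Ioi 0, H u := by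
    have := integral_comp_mul_left_Ioi H 0 hr
    rw [mul_zero, smul_eq_mul] at this
    rw [← this]
    refine setIntegral_congr_fun measurableSet_Ioi (fun s _ => ?_)
    simp only [hH, mul_div_cancel_left₀ _ hr.ne']
  rw [step3]
  have step4 : ∫ u in Ioi 0, H u
      = (r / Real.Gamma η) * ∫ u in Ioi 0, (w (u / r)).toReal * u ^ (η - 1) * Real.exp (-u) := by
    rw [← integral_const_mul]
    refine setIntegral_congr_fun measurableSet_Ioi (fun u hu => ?_)
    have hu0 : (0:ℝ) < u := hu
    have hur : (0:ℝ) ≤ u / r := by positivity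
    have hre : r ^ η = r * r ^ (η - 1) := by
      have h2 := Real.rpow_add hr 1 (η - 1)
      rw [show (1:ℝ) + (η - 1) = η by ring, Real.rpow_one] at h2
      exact h2
    have hpdf : gammaPDFReal η r (u / r) = r / Real.Gamma η * (u ^ (η - 1) * Real.exp (-u)) := by
      rw [gammaPDFReal, if_pos hur, mul_div_cancel₀ _ hr.ne', Real.div_rpow hu0.le hr.le, hre]
      have hrp : (0:ℝ) < r ^ (η - 1) := Real.rpow_pos_of_pos hr _
      have hΓ : Real.Gamma η ≠ 0 := (Real.Gamma_pos_of_pos hη).ne'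
      field_simp
    simp only [hH]
    rw [hpdf]
    ring
  rw [step4]
  have hΓ : Real.Gamma η ≠ 0 := (Real.Gamma_pos_of_pos hη).ne'
  field_simp

lemma key_CHPG (f : ℝ → ℝ) (hfm : Measurable f) (hf0 : ∀ t, 0 ≤ f t) (hf1 : ∀ t, f t ≤ 1)
    {C q η : ℝ} (hC : 0 < C) (hq : 0 < q) (hη : 0 < η)
    (hlim : Tendsto (fun t => f t / (C * t ^ q)) (𝓝[>] 0) (𝓝 1)) :
    Tendsto (fun r : ℝ => r ^ q * ∫ u in Ioi 0, f (u / r) * u ^ (η - 1) * Real.exp (-u))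
      atTop (𝓝 (C * Real.Gamma (q + η))) := by
  obtain ⟨δ, hδ0, hδ⟩ : ∃ δ > 0, ∀ t ∈ Ioc 0 δ, f t / (C * t ^ q) < 2 := by
    have h2 : ∀ᶠ t in 𝓝[>] (0:ℝ), f t / (C * t ^ q) < 2 :=
      hlim.eventually_lt_const (by norm_num)
    obtain ⟨u, hu, hsub⟩ := mem_nhdsGT_iff_exists_Ioc_subset.mp h2
    exact ⟨u, hu, fun t ht => hsub ht⟩
  set K : ℝ := max (2 * C) (δ⁻¹ ^ q) with hK_def
  have hK0 : 0 < K := lt_of_lt_of_le (by positivity) (le_max_left _ _)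
  have hK : ∀ t : ℝ, 0 < t → f t ≤ K * t ^ q := by
    intro t ht
    rcases le_or_gt t δ with h | h
    · have h1 := hδ t ⟨ht, h⟩
      have h2 : (0:ℝ) < C * t ^ q := by positivity
      have := (div_lt_iff₀ h2).mp h1
      calc f t ≤ 2 * C * t ^ q := by nlinarith
        _ ≤ K * t ^ q := by
            have := le_max_left (2 * C) (δ⁻¹ ^ q)
            have ht' : (0:ℝ) ≤ t ^ q := by positivity
            nlinarith
    · have h1 : (1:ℝ) ≤ (δ⁻¹ * t) ^ q := by
        apply Real.one_le_rpow _ hq.le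
        rw [show δ⁻¹ * t = t / δ by ring, one_le_div hδ0]
        linarith
      have h2 : (δ⁻¹ * t) ^ q = δ⁻¹ ^ q * t ^ q :=
        Real.mul_rpow (by positivity) ht.le
      calc f t ≤ 1 := hf1 t
        _ ≤ δ⁻¹ ^ q * t ^ q := by rw [← h2]; exact h1
        _ ≤ K * t ^ q := by
            have := le_max_right (2 * C) (δ⁻¹ ^ q)
            have ht' : (0:ℝ) ≤ t ^ q := by positivity
            nlinarith
  have hrw : ∀ r : ℝ, r ^ q * ∫ u in Ioi 0, f (u / r) * u ^ (η - 1) * Real.exp (-u)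
      = ∫ u in Ioi 0, r ^ q * (f (u / r) * u ^ (η - 1) * Real.exp (-u)) := by
    intro r; rw [integral_const_mul]
  simp_rw [hrw]
  have hval : C * Real.Gamma (q + η)
      = ∫ u in Ioi 0, C * (u ^ q * (u ^ (η - 1) * Real.exp (-u))) := by
    rw [Real.Gamma_eq_integral (by positivity : (0:ℝ) < q + η), ← integral_const_mul]
    refine setIntegral_congr_fun measurableSet_Ioi (fun u hu => ?_)
    have hu0 : (0:ℝ) < u := hu
    rw [show q + η - 1 = q + (η - 1) by ring, Real.rpow_add hu0]
    ring
  rw [hval]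
  refine tendsto_integral_filter_of_dominated_convergence
    (fun u => K * (Real.exp (-u) * u ^ (q + η - 1))) ?_ ?_ ?_ ?_
  · filter_upwards with r
    refine Measurable.aestronglyMeasurable ?_
    exact ((((hfm.comp (measurable_id.div_const r)).mul
      (measurable_id.pow_const (η - 1))).mul
      (Real.measurable_exp.comp measurable_neg)).const_mul (r ^ q))
  · filter_upwards [eventually_ge_atTop (1:ℝ)] with r hr1
    have hr0 : (0:ℝ) < r := lt_of_lt_of_le one_pos hr1
    refine (ae_restrict_iff' measurableSet_Ioi).mpr (ae_of_all _ (fun u hu => ?_))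
    have hu0 : (0:ℝ) < u := hu
    have hur : (0:ℝ) < u / r := by positivity
    have hb1 : r ^ q * f (u / r) ≤ K * u ^ q := by
      have := hK (u / r) hur
      have h2 : (u / r) ^ q = u ^ q / r ^ q := Real.div_rpow hu0.le hr0.le q
      have h3 : (0:ℝ) < r ^ q := Real.rpow_pos_of_pos hr0 _
      rw [h2] at this
      calc r ^ q * f (u / r) ≤ r ^ q * (K * (u ^ q / r ^ q)) := by nlinarith
        _ = K * u ^ q := by field_simp
    have hnn : 0 ≤ r ^ q * (f (u / r) * u ^ (η - 1) * Real.exp (-u)) := by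
      have := hf0 (u / r); positivity
    rw [Real.norm_eq_abs, abs_of_nonneg hnn]
    have h4 : u ^ (q + η - 1) = u ^ q * u ^ (η - 1) := by
      rw [show q + η - 1 = q + (η - 1) by ring, Real.rpow_add hu0]
    rw [h4]
    have h5 : (0:ℝ) ≤ u ^ (η - 1) := by positivity
    have h6 : (0:ℝ) < Real.exp (-u) := Real.exp_pos _
    nlinarith [mul_le_mul_of_nonneg_right hb1 (mul_nonneg h5 h6.le)]
  · exact ((Real.GammaIntegral_convergent (by positivity : (0:ℝ) < q + η)).const_mul K)
  · refine (ae_restrict_iff' measurableSet_Ioi).mpr (ae_of_all _ (fun u hu => ?_))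
    have hu0 : (0:ℝ) < u := hu
    have hcomp : Tendsto (fun r : ℝ => u / r) atTop (𝓝[>] 0) := by
      apply tendsto_nhdsWithin_of_tendsto_nhds_of_eventually_within
      · exact Tendsto.div_atTop tendsto_const_nhds tendsto_id
      · filter_upwards [eventually_gt_atTop (0:ℝ)] with r hr
        exact div_pos hu0 hr
    have h1 : Tendsto (fun r : ℝ => f (u / r) / (C * (u / r) ^ q)) atTop (𝓝 1) :=
      hlim.comp hcomp
    have h2 := h1.mul_const (C * (u ^ q * (u ^ (η - 1) * Real.exp (-u))))
    rw [one_mul] at h2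
    refine Tendsto.congr' ?_ h2
    filter_upwards [eventually_gt_atTop (0:ℝ)] with r hr
    have hur : (0:ℝ) < u / r := div_pos hu0 hr
    have h3 : (u / r) ^ q = u ^ q / r ^ q := Real.div_rpow hu0.le hr.le q
    have h4 : (0:ℝ) < r ^ q := Real.rpow_pos_of_pos hr _
    have h5 : (0:ℝ) < u ^ q := Real.rpow_pos_of_pos hu0 _
    rw [h3]
    field_simp

end Auxiliary

/-- Conditional hitting probability asymptotics for power-law short-time behavior under
gamma-distributed resetting: if `F_τ(t) ∼ A t^m` and `F_τ^{(k)}(t) ∼ B t^n` as `t → 0⁺`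
with `0 < m ≤ n`, then `P(κ = k | τ < σ_r) ∼ (B/A)(Γ(n+η)/Γ(m+η)) r^{m-n}` as `r → ∞`. -/
theorem conditional_hitting_powerlaw_gamma
    {Ω : Type*} [MeasurableSpace Ω] (μ : Measure Ω) [IsProbabilityMeasure μ]
    (τ : Ω → ℝ) (κ : Ω → ℕ) (k : ℕ) (σ : ℝ → Ω → ℝ)
    (hτ : Measurable τ) (hκ : Measurable κ) (hσ : ∀ r, Measurable (σ r))
    (hτpos : ∀ᵐ ω ∂μ, 0 < τ ω)
    (A B m n η : ℝ)
    (hA : 0 < A) (hB : 0 < B) (hm : 0 < m) (hmn : m ≤ n) (hη : 0 < η)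
    (hdist : ∀ r > 0, Measure.map (σ r) μ = gammaMeasure η r)
    (hindep : ∀ r > 0, IndepFun (fun ω => (τ ω, κ ω)) (σ r) μ)
    (hF : Tendsto (fun t => (μ {ω | τ ω ≤ t}).toReal / (A * t ^ m)) (𝓝[>] 0) (𝓝 1))
    (hFk : Tendsto (fun t => (μ {ω | τ ω ≤ t ∧ κ ω = k}).toReal / (B * t ^ n))
      (𝓝[>] 0) (𝓝 1))
    (hppos : ∀ r > 0, 0 < (μ {ω | τ ω < σ r ω}).toReal)
    (hpkpos : ∀ r > 0, 0 < (μ {ω | κ ω = k ∧ τ ω < σ r ω}).toReal) :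
    Tendsto (fun r : ℝ =>
        ((μ {ω | κ ω = k ∧ τ ω < σ r ω}).toReal / (μ {ω | τ ω < σ r ω}).toReal) /
          (B / A * (Real.Gamma (n + η) / Real.Gamma (m + η)) * r ^ (m - n)))
      atTop (𝓝 1) := by
  have hn : 0 < n := hm.trans_le hmn
  set f : ℝ → ℝ := fun s => (μ {ω | τ ω ≤ s}).toReal with hf_def
  set fk : ℝ → ℝ := fun s => (μ {ω | τ ω ≤ s ∧ κ ω = k}).toReal with hfk_def
  set Jf : ℝ → ℝ := fun r => ∫ u in Ioi 0, f (u / r) * u ^ (η - 1) * Real.exp (-u) with hJf_def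
  set Jk : ℝ → ℝ := fun r => ∫ u in Ioi 0, fk (u / r) * u ^ (η - 1) * Real.exp (-u) with hJk_def
  -- representations
  have hrepf : ∀ r : ℝ, 0 < r →
      (μ {ω | τ ω < σ r ω}).toReal = (Real.Gamma η)⁻¹ * Jf r := by
    intro r hr
    have e1 : {ω | τ ω < σ r ω} = {ω | (τ ω, κ ω) ∈ (univ : Set (ℝ × ℕ)) ∧ τ ω < σ r ω} := by
      ext ω; simp
    rw [e1, rep1_CHPG μ τ κ hτ hκ (σ r) (hσ r) hη hr (hdist r hr) (hindep r hr)
      MeasurableSet.univ]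
    have e2 : (fun s : ℝ => μ {ω | (τ ω, κ ω) ∈ (univ : Set (ℝ × ℕ)) ∧ τ ω ≤ s})
        = fun s => μ {ω | τ ω ≤ s} := by
      funext s; congr 1; ext ω; simp
    rw [e2, rep2_CHPG hη hr _ (fun a b hab => measure_mono (fun ω h => h.trans hab))
      (fun s => prob_le_one)]
  have hrepk : ∀ r : ℝ, 0 < r →
      (μ {ω | κ ω = k ∧ τ ω < σ r ω}).toReal = (Real.Gamma η)⁻¹ * Jk r := by
    intro r hr
    have hS : MeasurableSet {p : ℝ × ℕ | p.2 = k} :=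
      measurable_snd (measurableSet_singleton k)
    have e1 : {ω | κ ω = k ∧ τ ω < σ r ω}
        = {ω | (τ ω, κ ω) ∈ {p : ℝ × ℕ | p.2 = k} ∧ τ ω < σ r ω} := by
      ext ω; simp
    rw [e1, rep1_CHPG μ τ κ hτ hκ (σ r) (hσ r) hη hr (hdist r hr) (hindep r hr) hS]
    have e2 : (fun s : ℝ => μ {ω | (τ ω, κ ω) ∈ {p : ℝ × ℕ | p.2 = k} ∧ τ ω ≤ s})
        = fun s => μ {ω | τ ω ≤ s ∧ κ ω = k} := by
      funext s; congr 1; ext ω; simp [and_comm]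
    have hmono : Monotone (fun s : ℝ => μ {ω | τ ω ≤ s ∧ κ ω = k}) := by
      intro a b hab
      refine measure_mono ?_
      intro ω h
      exact ⟨h.1.trans hab, h.2⟩
    rw [e2, rep2_CHPG hη hr _ hmono (fun s => prob_le_one)]
  -- properties of f, fk
  have hfmono : Monotone f := fun a b hab => ENNReal.toReal_mono (measure_ne_top μ _)
    (measure_mono (fun ω h => le_trans h hab))
  have hfkmono : Monotone fk := by
    intro a b hab
    refine ENNReal.toReal_mono (measure_ne_top μ _) (measure_mono ?_)
    intro ω h
    exact ⟨h.1.trans hab, h.2⟩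
  have hf0 : ∀ t, 0 ≤ f t := fun t => ENNReal.toReal_nonneg
  have hfk0 : ∀ t, 0 ≤ fk t := fun t => ENNReal.toReal_nonneg
  have hf1 : ∀ t, f t ≤ 1 := fun t => by
    simpa using ENNReal.toReal_mono ENNReal.one_ne_top (prob_le_one (μ := μ))
  have hfk1 : ∀ t, fk t ≤ 1 := fun t => by
    simpa using ENNReal.toReal_mono ENNReal.one_ne_top (prob_le_one (μ := μ))
  -- key limits
  have Hp : Tendsto (fun r : ℝ => r ^ m * Jf r) atTop (𝓝 (A * Real.Gamma (m + η))) :=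
    key_CHPG f hfmono.measurable hf0 hf1 hA hm hη hF
  have Hk : Tendsto (fun r : ℝ => r ^ n * Jk r) atTop (𝓝 (B * Real.Gamma (n + η))) :=
    key_CHPG fk hfkmono.measurable hfk0 hfk1 hB hn hη hFk
  -- nonvanishing constants
  have hΓm : (0:ℝ) < Real.Gamma (m + η) := Real.Gamma_pos_of_pos (by positivity)
  have hΓn : (0:ℝ) < Real.Gamma (n + η) := Real.Gamma_pos_of_pos (by positivity)
  have hΓη : (0:ℝ) < Real.Gamma η := Real.Gamma_pos_of_pos hη
  have hAm : A * Real.Gamma (m + η) ≠ 0 := by positivity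
  -- the auxiliary limit
  have G : Tendsto (fun r : ℝ =>
      ((r ^ n * Jk r) / (r ^ m * Jf r)) * ((A * Real.Gamma (m + η)) / (B * Real.Gamma (n + η))))
      atTop (𝓝 1) := by
    have := (Hk.div Hp hAm).mul_const ((A * Real.Gamma (m + η)) / (B * Real.Gamma (n + η)))
    have hval : B * Real.Gamma (n + η) / (A * Real.Gamma (m + η)) *
        (A * Real.Gamma (m + η) / (B * Real.Gamma (n + η))) = 1 := by
      field_simp
    rwa [hval] at this
  refine Tendsto.congr' ?_ G
  filter_upwards [eventually_gt_atTop (0:ℝ)] with r hr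
  rw [hrepf r hr, hrepk r hr]
  have hJfpos : 0 < Jf r := by
    have hp := hppos r hr
    rw [hrepf r hr] at hp
    by_contra hcon
    push_neg at hcon
    nlinarith [inv_pos.mpr hΓη]
  have hJkpos : 0 < Jk r := by
    have hp := hpkpos r hr
    rw [hrepk r hr] at hp
    by_contra hcon
    push_neg at hcon
    nlinarith [inv_pos.mpr hΓη]
  have hrm : (0:ℝ) < r ^ m := Real.rpow_pos_of_pos hr _
  have hrn : (0:ℝ) < r ^ n := Real.rpow_pos_of_pos hr _
  have hrsub : r ^ (m - n) = r ^ m / r ^ n := Real.rpow_sub hr m n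
  rw [hrsub]
  field_simp
end

section
/- Suppose F_τ(t) ∼ A t and F_τ^{(k)}(t) ∼ B t as t → 0⁺ with A, B > 0, and σ is gamma distributed with shape η > 0 and rate r > 0, independent of τ. Then P(κ = k | τ < σ) → B/A as r → ∞; in particular the limiting conditional hitting probability is strictly positive. -/
open MeasureTheory ProbabilityTheory Real Filter Set Topology

open scoped ENNReal

lemma levy_key (g : ℝ → ℝ≥0∞) (hmeas : Measurable g) (hg1 : ∀ t, g t ≤ 1)
    (hg0 : ∀ t ≤ (0:ℝ), g t = 0) {C η : ℝ} (hC : 0 < C) (hη : 0 < η)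
    (hasym : Tendsto (fun t => (g t).toReal / (C * t)) (𝓝[>] 0) (𝓝 1)) :
    Tendsto (fun r : ℝ => r * (∫⁻ s, g s ∂(gammaMeasure η r)).toReal) atTop (𝓝 (C * η)) := by
  have hΓ : 0 < Real.Gamma η := Real.Gamma_pos_of_pos hη
  have hgtop : ∀ t, g t ≠ ∞ := fun t => ((hg1 t).trans_lt (by norm_num)).ne
  have hgt1 : ∀ t, (g t).toReal ≤ 1 := by
    intro t
    have := ENNReal.toReal_mono (by norm_num) (hg1 t)
    simpa using this
  -- extract δ such that (g t).toReal ≤ 2 C t on (0, δ)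
  obtain ⟨δ, hδpos, hδ⟩ : ∃ δ > 0, ∀ t, 0 < t → t < δ → (g t).toReal ≤ 2 * C * t := by
    have h2 : ∀ᶠ t in 𝓝[>] (0:ℝ), (g t).toReal / (C * t) < 2 :=
      hasym.eventually_lt_const one_lt_two
    rw [eventually_nhdsWithin_iff, Metric.eventually_nhds_iff] at h2
    obtain ⟨ε, hε, h⟩ := h2
    refine ⟨ε, hε, fun t ht htε => ?_⟩
    have hd : dist t 0 < ε := by
      rw [Real.dist_eq, sub_zero, abs_of_pos ht]; exact htε
    have := h hd ht
    have hCt : 0 < C * t := by positivity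
    nlinarith [(div_lt_iff₀ hCt).mp this]
  set φ : ℝ → ℝ := fun u => u ^ (η - 1) * Real.exp (-u) / Real.Gamma η with hφ
  have hφnn : ∀ u : ℝ, 0 ≤ u → 0 ≤ φ u := by
    intro u hu
    have : (0:ℝ) ≤ u ^ (η - 1) := Real.rpow_nonneg hu _
    positivity
  set D : ℝ := max (2 * C) δ⁻¹ with hD
  have hDpos : 0 < D := lt_max_of_lt_left (by positivity)
  set F : ℝ → ℝ → ℝ≥0∞ := fun r u => gammaPDF η r (u / r) * g (u / r) with hF
  -- rescaling identity
  have step2 : ∀ r : ℝ, 0 < r →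
      ENNReal.ofReal r * ∫⁻ s, g s ∂(gammaMeasure η r) = ∫⁻ u, F r u := by
    intro r hr
    have hpdfm : Measurable (gammaPDF η r) := (measurable_gammaPDFReal η r).ennreal_ofReal
    have hHmeas : Measurable fun s => gammaPDF η r s * g s := hpdfm.mul hmeas
    rw [gammaMeasure, lintegral_withDensity_eq_lintegral_mul _ hpdfm hmeas]
    have hmap := Real.map_volume_mul_left (a := r⁻¹) (inv_ne_zero hr.ne')
    have habs : ENNReal.ofReal |(r⁻¹)⁻¹| = ENNReal.ofReal r := by
      rw [inv_inv, abs_of_pos hr]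
    calc ENNReal.ofReal r * ∫⁻ s, (gammaPDF η r * g) s
        = ∫⁻ s, gammaPDF η r s * g s ∂(ENNReal.ofReal |(r⁻¹)⁻¹| • volume) := by
          rw [lintegral_smul_measure, habs]; rfl
      _ = ∫⁻ s, gammaPDF η r s * g s ∂(Measure.map (r⁻¹ * ·) volume) := by rw [hmap]
      _ = ∫⁻ u, gammaPDF η r (r⁻¹ * u) * g (r⁻¹ * u) := by
          rw [lintegral_map hHmeas (measurable_const_mul _)]
      _ = ∫⁻ u, F r u := by
          refine lintegral_congr fun u => ?_
          rw [hF]; simp only [inv_mul_eq_div]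
  -- closed form on positive reals
  have hform : ∀ r : ℝ, 0 < r → ∀ u : ℝ, 0 < u →
      F r u = ENNReal.ofReal (φ u * (r * (g (u / r)).toReal)) := by
    intro r hr u hu
    have hur : (0:ℝ) ≤ u / r := by positivity
    have h1 : r ^ η / Real.Gamma η * (u / r) ^ (η - 1) * Real.exp (-(r * (u / r)))
        = φ u * r := by
      have hru : r * (u / r) = u := by field_simp
      rw [hru, Real.div_rpow hu.le hr.le]
      have hr1 : r ^ η = r ^ (η - 1) * r := by
        rw [← Real.rpow_add_one hr.ne' (η - 1)]; ring_nf
      have hrη : (0:ℝ) < r ^ (η - 1) := Real.rpow_pos_of_pos hr _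
      rw [hφ, hr1]
      field_simp
    rw [hF]
    simp only
    rw [gammaPDF_of_nonneg hur, h1,
      show φ u * (r * (g (u / r)).toReal) = (φ u * r) * (g (u / r)).toReal by ring,
      ENNReal.ofReal_mul (by positivity : (0:ℝ) ≤ φ u * r),
      ENNReal.ofReal_toReal (hgtop (u / r))]
  -- zero for nonpositive u
  have hzero : ∀ r : ℝ, 0 < r → ∀ u : ℝ, u ≤ 0 → F r u = 0 := by
    intro r hr u hu
    have : u / r ≤ 0 := div_nonpos_of_nonpos_of_nonneg hu hr.le
    rw [hF]; simp [hg0 _ this]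
  -- the dominating function and the limit function
  set bound : ℝ → ℝ≥0∞ :=
    (Ioi (0:ℝ)).indicator fun u => ENNReal.ofReal (φ u * (D * u)) with hbound_def
  set flim : ℝ → ℝ≥0∞ :=
    (Ioi (0:ℝ)).indicator fun u => ENNReal.ofReal (φ u * (C * u)) with hflim_def
  -- integrability of u ↦ φ u * (c * u) on Ioi 0
  have hint : ∀ c : ℝ, IntegrableOn (fun u : ℝ => φ u * (c * u)) (Ioi 0) := by
    intro c
    have h0 : IntegrableOn (fun x : ℝ => Real.exp (-x) * x ^ (η + 1 - 1)) (Ioi 0) :=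
      Real.GammaIntegral_convergent (by linarith)
    have h1 : IntegrableOn (fun x : ℝ => c / Real.Gamma η * (Real.exp (-x) * x ^ (η + 1 - 1)))
        (Ioi 0) := h0.const_mul _
    refine h1.congr_fun (fun u hu => ?_) measurableSet_Ioi
    have hu : (0:ℝ) < u := hu
    have : u ^ (η + 1 - 1) = u ^ (η - 1) * u := by
      rw [show η + 1 - 1 = (η - 1) + 1 by ring, Real.rpow_add_one hu.ne']
    show c / Real.Gamma η * (Real.exp (-u) * u ^ (η + 1 - 1)) = φ u * (c * u)
    rw [this, hφ]
    field_simp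
  have hboundfin : ∫⁻ u, bound u ≠ ∞ := by
    rw [hbound_def, lintegral_indicator measurableSet_Ioi _]
    exact (Integrable.lintegral_lt_top (hint D)).ne
  -- value of the limit integral
  have hflimval : ∫⁻ u, flim u = ENNReal.ofReal (C * η) := by
    rw [hflim_def, lintegral_indicator measurableSet_Ioi _,
      ← ofReal_integral_eq_lintegral_ofReal (hint C)]
    · congr 1
      have : ∀ u ∈ Ioi (0:ℝ), φ u * (C * u)
          = C / Real.Gamma η * (u ^ (η + 1 - 1) * Real.exp (-(1 * u))) := by
        intro u hu
        have hu : (0:ℝ) < u := hu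
        have : u ^ (η + 1 - 1) = u ^ (η - 1) * u := by
          rw [show η + 1 - 1 = (η - 1) + 1 by ring, Real.rpow_add_one hu.ne']
        rw [this, hφ, one_mul]
        field_simp
      rw [setIntegral_congr_fun measurableSet_Ioi this, integral_const_mul,
        integral_rpow_mul_exp_neg_mul_Ioi (by linarith) one_pos,
        Real.Gamma_add_one hη.ne']
      rw [one_div_one, Real.one_rpow, one_mul]
      field_simp
    · rw [EventuallyLE, ae_restrict_iff' measurableSet_Ioi]
      refine ae_of_all _ fun u hu => ?_
      have hu : (0:ℝ) < u := hu
      have := hφnn u hu.le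
      simp only [Pi.zero_apply]
      positivity
  -- dominated convergence
  have hmain : Tendsto (fun r : ℝ => ∫⁻ u, F r u) atTop (𝓝 (∫⁻ u, flim u)) := by
    refine tendsto_lintegral_filter_of_dominated_convergence bound ?_ ?_ hboundfin ?_
    · refine Eventually.of_forall fun r => ?_
      exact (((measurable_gammaPDFReal η r).ennreal_ofReal.comp
        (measurable_id.div_const r)).mul (hmeas.comp (measurable_id.div_const r)))
    · filter_upwards [eventually_ge_atTop (1:ℝ)] with r hr1
      have hr : (0:ℝ) < r := lt_of_lt_of_le one_pos hr1
      refine ae_of_all _ fun u => ?_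
      rcases le_or_gt u 0 with hu | hu
      · rw [hzero r hr u hu]; exact zero_le
      · rw [hform r hr u hu, hbound_def, indicator_of_mem (mem_Ioi.mpr hu)]
        refine ENNReal.ofReal_le_ofReal ?_
        refine mul_le_mul_of_nonneg_left ?_ (hφnn u hu.le)
        have hnn : 0 ≤ (g (u / r)).toReal := ENNReal.toReal_nonneg
        rcases lt_or_ge (u / r) δ with hcase | hcase
        · have hle := hδ (u / r) (by positivity) hcase
          have : r * (g (u / r)).toReal ≤ r * (2 * C * (u / r)) :=
            mul_le_mul_of_nonneg_left hle hr.le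
          have heq : r * (2 * C * (u / r)) = 2 * C * u := by field_simp
          have hDle : 2 * C * u ≤ D * u :=
            mul_le_mul_of_nonneg_right (le_max_left _ _) hu.le
          linarith [this, heq ▸ this]
        · have hrle : r ≤ u / δ := by
            rw [le_div_iff₀ hδpos]
            have h := (le_div_iff₀ hr).mp hcase
            linarith
          have h1 : r * (g (u / r)).toReal ≤ r := by
            nlinarith [hgt1 (u / r)]
          have h2 : u / δ ≤ D * u := by
            rw [div_eq_inv_mul]
            exact mul_le_mul_of_nonneg_right (le_max_right _ _) hu.le
          linarith
    · refine ae_of_all _ fun u => ?_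
      rcases le_or_gt u 0 with hu | hu
      · have : flim u = 0 := by
          rw [hflim_def, indicator_of_notMem (by simpa using hu)]
        rw [this]
        refine Tendsto.congr' ?_ tendsto_const_nhds
        filter_upwards [eventually_gt_atTop (0:ℝ)] with r hr
        exact (hzero r hr u hu).symm
      · have hflimu : flim u = ENNReal.ofReal (φ u * (C * u)) := by
          rw [hflim_def, indicator_of_mem (mem_Ioi.mpr hu)]
        rw [hflimu]
        have h1 : Tendsto (fun r : ℝ => u / r) atTop (𝓝[>] 0) := by
          rw [tendsto_nhdsWithin_iff]
          constructor
          · simpa [div_eq_mul_inv] using tendsto_inv_atTop_zero.const_mul u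
          · filter_upwards [eventually_gt_atTop (0:ℝ)] with r hr
            exact mem_Ioi.mpr (by positivity)
        have h2 := hasym.comp h1
        have h3 : Tendsto (fun r : ℝ => φ u * (C * u *
            ((g (u / r)).toReal / (C * (u / r))))) atTop (𝓝 (φ u * (C * u * 1))) :=
          (h2.const_mul (C * u)).const_mul (φ u)
        have h4 : Tendsto (fun r : ℝ => φ u * (r * (g (u / r)).toReal)) atTop
            (𝓝 (φ u * (C * u))) := by
          rw [show φ u * (C * u) = φ u * (C * u * 1) by ring]
          refine h3.congr' ?_
          filter_upwards [eventually_gt_atTop (0:ℝ)] with r hr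
          congr 1
          have hC' : C ≠ 0 := hC.ne'
          have hu' : u ≠ 0 := hu.ne'
          have hr' : r ≠ 0 := hr.ne'
          field_simp
        have h5 := (ENNReal.continuous_ofReal.tendsto _).comp h4
        refine h5.congr' ?_
        filter_upwards [eventually_gt_atTop (0:ℝ)] with r hr
        exact (hform r hr u hu).symm
  -- conclude
  rw [hflimval] at hmain
  have htoReal := (ENNReal.tendsto_toReal (by simp) |>.comp hmain)
  rw [ENNReal.toReal_ofReal (by positivity)] at htoReal
  refine htoReal.congr' ?_
  filter_upwards [eventually_gt_atTop (0:ℝ)] with r hr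
  have := step2 r hr
  rw [Function.comp_apply, ← this, ENNReal.toReal_mul, ENNReal.toReal_ofReal hr.le]

/-- The `m = n = 1` power-law case (superdiffusive Lévy flights): if `F_τ(t) ∼ A t` and
`F_τ^{(k)}(t) ∼ B t` as `t → 0⁺` and `σ_r` is gamma with shape `η`, rate `r`, independent
of `(τ, κ)`, then `P(κ = k | τ < σ_r) → B/A` as `r → ∞`, which is strictly positive. -/
theorem conditional_hitting_levy
    {Ω : Type*} [MeasurableSpace Ω] (μ : Measure Ω) [IsProbabilityMeasure μ]
    (τ : Ω → ℝ) (κ : Ω → ℕ) (k : ℕ) (σ : ℝ → Ω → ℝ)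
    (hτ : Measurable τ) (hκ : Measurable κ) (hσ : ∀ r, Measurable (σ r))
    (hτpos : ∀ᵐ ω ∂μ, 0 < τ ω)
    (A B η : ℝ)
    (hA : 0 < A) (hB : 0 < B) (hη : 0 < η)
    (hdist : ∀ r > 0, Measure.map (σ r) μ = gammaMeasure η r)
    (hindep : ∀ r > 0, IndepFun (fun ω => (τ ω, κ ω)) (σ r) μ)
    (hF : Tendsto (fun t => (μ {ω | τ ω ≤ t}).toReal / (A * t)) (𝓝[>] 0) (𝓝 1))
    (hFk : Tendsto (fun t => (μ {ω | τ ω ≤ t ∧ κ ω = k}).toReal / (B * t))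
      (𝓝[>] 0) (𝓝 1))
    (hppos : ∀ r > 0, 0 < (μ {ω | τ ω < σ r ω}).toReal)
    (hpkpos : ∀ r > 0, 0 < (μ {ω | κ ω = k ∧ τ ω < σ r ω}).toReal) :
    Tendsto (fun r : ℝ =>
        (μ {ω | κ ω = k ∧ τ ω < σ r ω}).toReal / (μ {ω | τ ω < σ r ω}).toReal)
      atTop (𝓝 (B / A)) ∧ 0 < B / A := by
  have hX : Measurable fun ω => (τ ω, κ ω) := hτ.prodMk hκ
  have hnull : μ {ω | τ ω ≤ 0} = 0 := by
    have h := ae_iff.mp hτpos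
    refine measure_mono_null (fun ω (hw : τ ω ≤ 0) => ?_) h
    exact not_lt.mpr hw
  -- Fubini via independence
  have hprod : ∀ r : ℝ, 0 < r → ∀ S : Set ((ℝ × ℕ) × ℝ), MeasurableSet S →
      μ {ω | ((τ ω, κ ω), σ r ω) ∈ S}
        = ∫⁻ s, μ {ω | ((τ ω, κ ω), s) ∈ S} ∂(gammaMeasure η r) := by
    intro r hr S hS
    have hγ : IsProbabilityMeasure (gammaMeasure η r) := isProbabilityMeasure_gammaMeasure hη hr
    have hmapX : IsProbabilityMeasure (μ.map fun ω => (τ ω, κ ω)) :=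
      Measure.isProbabilityMeasure_map hX.aemeasurable
    have hpair := (indepFun_iff_map_prod_eq_prod_map_map hX.aemeasurable
      (hσ r).aemeasurable).mp (hindep r hr)
    rw [hdist r hr] at hpair
    calc μ {ω | ((τ ω, κ ω), σ r ω) ∈ S}
        = μ.map (fun ω => ((τ ω, κ ω), σ r ω)) S :=
          (Measure.map_apply (hX.prodMk (hσ r)) hS).symm
      _ = ((μ.map fun ω => (τ ω, κ ω)).prod (gammaMeasure η r)) S := by rw [hpair]
      _ = ∫⁻ s, (μ.map fun ω => (τ ω, κ ω)) ((fun x => (x, s)) ⁻¹' S)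
            ∂(gammaMeasure η r) := Measure.prod_apply_symm hS
      _ = ∫⁻ s, μ {ω | ((τ ω, κ ω), s) ∈ S} ∂(gammaMeasure η r) :=
          lintegral_congr fun s =>
            Measure.map_apply hX (measurable_prodMk_right hS)
  -- a.e. in s (for gamma measure), strict and non-strict agree
  have hatoms : Set.Countable {s : ℝ | 0 < μ (τ ⁻¹' {s})} := by
    have hmapτ : IsProbabilityMeasure (μ.map τ) := Measure.isProbabilityMeasure_map hτ.aemeasurable
    have h := MeasureTheory.Measure.countable_meas_pos_of_disjoint_iUnion
      (μ := μ.map τ) (As := fun s : ℝ => {s})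
      (fun s => measurableSet_singleton s)
      (fun a b hab => by simp [Function.onFun, hab])
    have heq : {s : ℝ | 0 < μ (τ ⁻¹' {s})} = {s : ℝ | 0 < (μ.map τ) {s}} := by
      ext s
      simp [Measure.map_apply hτ (measurableSet_singleton s)]
    rw [heq]
    exact h
  have hae : ∀ r : ℝ, ∀ᵐ s ∂(gammaMeasure η r), μ (τ ⁻¹' {s}) = 0 := by
    intro r
    have hv : volume {s : ℝ | μ (τ ⁻¹' {s}) ≠ 0} = 0 := by
      apply Set.Countable.measure_zero
      refine hatoms.mono fun s hs => ?_
      exact pos_iff_ne_zero.mpr hs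
    have := (withDensity_absolutelyContinuous volume (gammaPDF η r)) hv
    rw [ae_iff]
    simpa [gammaMeasure] using this
  -- the two monotone CDF-like functions
  set g1 : ℝ → ℝ≥0∞ := fun s => μ {ω | τ ω ≤ s} with hg1def
  set g2 : ℝ → ℝ≥0∞ := fun s => μ {ω | τ ω ≤ s ∧ κ ω = k} with hg2def
  have hg1mono : Monotone g1 := fun s t hst =>
    measure_mono fun ω (h : τ ω ≤ s) => le_trans h hst
  have hg2mono : Monotone g2 := fun s t hst =>
    measure_mono fun ω h => ⟨le_trans h.1 hst, h.2⟩
  have key1 := levy_key g1 hg1mono.measurable (fun t => prob_le_one)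
    (fun t ht => measure_mono_null (fun ω (h : τ ω ≤ t) => le_trans h ht) hnull) hA hη hF
  have key2 := levy_key g2 hg2mono.measurable (fun t => prob_le_one)
    (fun t ht => measure_mono_null (fun ω h => le_trans h.1 ht) hnull) hB hη hFk
  -- identification of the denominators
  have iden : ∀ r : ℝ, 0 < r →
      μ {ω | τ ω < σ r ω} = ∫⁻ s, g1 s ∂(gammaMeasure η r) := by
    intro r hr
    have hS : MeasurableSet {p : (ℝ × ℕ) × ℝ | p.1.1 < p.2} :=
      measurableSet_lt (measurable_fst.fst) measurable_snd
    have h := hprod r hr _ hS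
    rw [show {ω | ((τ ω, κ ω), σ r ω) ∈ {p : (ℝ × ℕ) × ℝ | p.1.1 < p.2}}
        = {ω | τ ω < σ r ω} from rfl] at h
    rw [h]
    refine lintegral_congr_ae ?_
    filter_upwards [hae r] with s hs
    refine le_antisymm (measure_mono fun ω (h : τ ω < s) => le_of_lt h) ?_
    calc g1 s ≤ μ ({ω | τ ω < s} ∪ τ ⁻¹' {s}) := by
          refine measure_mono fun ω (h : τ ω ≤ s) => ?_
          rcases lt_or_eq_of_le h with h' | h'
          · exact Or.inl h'
          · exact Or.inr h'
      _ ≤ μ {ω | τ ω < s} + μ (τ ⁻¹' {s}) := measure_union_le _ _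
      _ = μ {ω | τ ω < s} := by rw [hs, add_zero]
  have idenk : ∀ r : ℝ, 0 < r →
      μ {ω | κ ω = k ∧ τ ω < σ r ω} = ∫⁻ s, g2 s ∂(gammaMeasure η r) := by
    intro r hr
    have hS : MeasurableSet {p : (ℝ × ℕ) × ℝ | p.1.2 = k ∧ p.1.1 < p.2} := by
      refine MeasurableSet.inter ?_ (measurableSet_lt (measurable_fst.fst) measurable_snd)
      exact (measurable_fst.snd) (measurableSet_singleton k)
    have h := hprod r hr _ hS
    rw [show {ω | ((τ ω, κ ω), σ r ω) ∈ {p : (ℝ × ℕ) × ℝ | p.1.2 = k ∧ p.1.1 < p.2}}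
        = {ω | κ ω = k ∧ τ ω < σ r ω} from rfl] at h
    rw [h]
    refine lintegral_congr_ae ?_
    filter_upwards [hae r] with s hs
    refine le_antisymm (measure_mono fun ω h => ⟨le_of_lt h.2, h.1⟩) ?_
    calc g2 s ≤ μ ({ω | κ ω = k ∧ τ ω < s} ∪ τ ⁻¹' {s}) := by
          refine measure_mono fun ω h => ?_
          rcases lt_or_eq_of_le h.1 with h' | h'
          · exact Or.inl ⟨h.2, h'⟩
          · exact Or.inr h'
      _ ≤ μ {ω | κ ω = k ∧ τ ω < s} + μ (τ ⁻¹' {s}) := measure_union_le _ _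
      _ = μ {ω | κ ω = k ∧ τ ω < s} := by rw [hs, add_zero]
  -- assemble
  have hDen : Tendsto (fun r : ℝ => r * (μ {ω | τ ω < σ r ω}).toReal) atTop (𝓝 (A * η)) := by
    refine key1.congr' ?_
    filter_upwards [eventually_gt_atTop (0:ℝ)] with r hr
    rw [iden r hr]
  have hNum : Tendsto (fun r : ℝ => r * (μ {ω | κ ω = k ∧ τ ω < σ r ω}).toReal) atTop
      (𝓝 (B * η)) := by
    refine key2.congr' ?_
    filter_upwards [eventually_gt_atTop (0:ℝ)] with r hr
    rw [idenk r hr]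
  have hratio := hNum.div hDen (by positivity : A * η ≠ 0)
  have hBA : (B * η) / (A * η) = B / A := by
    rw [mul_div_mul_right _ _ hη.ne']
  rw [hBA] at hratio
  refine ⟨hratio.congr' ?_, by positivity⟩
  filter_upwards [eventually_gt_atTop (0:ℝ)] with r hr
  exact mul_div_mul_left _ _ hr.ne'
end

section
/- For m ∈ ℝ and C > 0, the integral ∫₀^{2/r} t^m e^{-C/t} dt is asymptotically equivalent to (1/C)·(2/r)^{m+2}·e^{-Cr/2} as r → ∞. -/
open MeasureTheory Real Filter Set Topology


lemma aux_tendsto_zero (m C : ℝ) (hC : 0 < C) :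
    Tendsto (fun t : ℝ => t ^ m * Real.exp (-C / t)) (𝓝[>] (0:ℝ)) (𝓝 0) := by
  have h1 : Tendsto (fun t : ℝ => m * (Real.log t * t) - C) (𝓝[>] (0:ℝ)) (𝓝 (-C)) := by
    have h0 := (tendsto_log_mul_rpow_nhdsGT_zero one_pos).const_mul m
    simp only [rpow_one] at h0
    simpa using h0.sub_const C
  have h2 : Tendsto (fun t : ℝ => (m * (Real.log t * t) - C) * t⁻¹) (𝓝[>] (0:ℝ)) atBot :=
    Filter.Tendsto.neg_mul_atTop (by linarith) h1 tendsto_inv_nhdsGT_zero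
  have h3 := (Real.tendsto_exp_atBot).comp h2
  refine h3.congr' ?_
  filter_upwards [self_mem_nhdsWithin] with t ht
  have ht : (0:ℝ) < t := ht
  rw [Function.comp_apply, Real.rpow_def_of_pos ht, ← Real.exp_add]
  congr 1
  field_simp
  ring

lemma aux_integrableOn (m C ε : ℝ) (hC : 0 < C) :
    IntegrableOn (fun t : ℝ => t ^ m * Real.exp (-C / t)) (Ioc 0 ε) := by
  -- bound near 0
  have h1 : ∀ᶠ t in 𝓝[>] (0:ℝ), ‖t ^ m * Real.exp (-C / t)‖ < 1 := by
    have := (aux_tendsto_zero m C hC).norm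
    simp only [norm_zero] at this
    exact this.eventually_lt_const one_pos
  obtain ⟨δ, hδ, hδ1⟩ := (mem_nhdsGT_iff_exists_Ioo_subset).mp h1
  have hδ0 : (0:ℝ) < δ := hδ
  -- bound on compact part
  have hcont : ContinuousOn (fun t : ℝ => t ^ m * Real.exp (-C / t)) (Icc δ ε) := by
    intro t ht
    have ht0 : t ≠ 0 := ne_of_gt (lt_of_lt_of_le hδ0 ht.1)
    exact ((Real.continuousAt_rpow_const t m (Or.inl ht0)).mul
      (Real.continuous_exp.continuousAt.comp ((continuousAt_const.div continuousAt_id ht0)))).continuousWithinAt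
  obtain ⟨M, hM⟩ := (isCompact_Icc (a := δ) (b := ε)).exists_bound_of_continuousOn hcont
  refine Measure.integrableOn_of_bounded (M := max 1 M) measure_Ioc_lt_top.ne ?_ ?_
  · exact ((measurable_id.pow_const m).mul
      ((measurable_const.div measurable_id).exp)).aestronglyMeasurable
  · refine (ae_restrict_iff' measurableSet_Ioc).mpr (ae_of_all _ fun t ht => ?_)
    rcases lt_or_ge t δ with h | h
    · exact le_max_of_le_left (hδ1 ⟨ht.1, h⟩).le
    · exact le_max_of_le_right (hM t ⟨h, ht.2⟩)

lemma aux_hasDerivAt (m C : ℝ) {t : ℝ} (ht : 0 < t) :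
    HasDerivAt (fun t : ℝ => 1/C * (t ^ (m+2) * Real.exp (-C / t)))
      (1/C * ((m+2) * t ^ (m+1) * Real.exp (-C/t) + t ^ (m+2) * (Real.exp (-C/t) * (C / t^2)))) t := by
  have h1 : HasDerivAt (fun t : ℝ => t ^ (m+2)) ((m+2) * t ^ (m+1)) t := by
    have := Real.hasDerivAt_rpow_const (x := t) (p := m+2) (Or.inl ht.ne')
    simpa [show m + 2 - 1 = m + 1 by ring] using this
  have h2 : HasDerivAt (fun t : ℝ => -C / t) (C / t^2) t := by
    have h := (hasDerivAt_inv ht.ne').const_mul (-C)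
    have : -C * -(t ^ 2)⁻¹ = C / t ^ 2 := by field_simp
    simpa [div_eq_mul_inv, this] using h
  exact ((h1.mul h2.exp)).const_mul (1/C)

lemma aux_key_identity (m C ε : ℝ) (hC : 0 < C) (hε : 0 < ε) :
    (∫ t in Ioo (0:ℝ) ε, t ^ m * Real.exp (-C / t))
      + (m+2)/C * (∫ t in Ioo (0:ℝ) ε, t ^ (m+1) * Real.exp (-C / t))
      = 1/C * ε ^ (m+2) * Real.exp (-C/ε) := by
  set f : ℝ → ℝ := fun t => t ^ m * Real.exp (-C / t) with hf
  set f1 : ℝ → ℝ := fun t => t ^ (m+1) * Real.exp (-C / t) with hf1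
  have hderiv : ∀ t ∈ Ioo (0:ℝ) ε, HasDerivAt (fun t : ℝ => 1/C * (t ^ (m+2) * Real.exp (-C / t)))
      (f t + (m+2)/C * f1 t) t := by
    intro t ht
    have ht0 := ht.1
    have key : 1/C * ((m+2) * t ^ (m+1) * Real.exp (-C/t) + t ^ (m+2) * (Real.exp (-C/t) * (C / t^2)))
        = f t + (m+2)/C * f1 t := by
      have h2 : t ^ (m+2) = t ^ m * t ^ 2 := by
        rw [← Real.rpow_natCast t 2, ← Real.rpow_add ht0]
        norm_num
      rw [hf, hf1]
      simp only []
      rw [h2]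
      field_simp
      ring
    rw [← key]
    exact aux_hasDerivAt m C ht0
  have hint : IntervalIntegrable (fun t => f t + (m+2)/C * f1 t) volume 0 ε := by
    rw [intervalIntegrable_iff_integrableOn_Ioc_of_le hε.le]
    exact (aux_integrableOn m C ε hC).add ((aux_integrableOn (m+1) C ε hC).const_mul _)
  have ha : Tendsto (fun t : ℝ => 1/C * (t ^ (m+2) * Real.exp (-C / t))) (𝓝[>] (0:ℝ)) (𝓝 0) := by
    have := (aux_tendsto_zero (m+2) C hC).const_mul (1/C)
    simpa using this
  have hb : Tendsto (fun t : ℝ => 1/C * (t ^ (m+2) * Real.exp (-C / t))) (𝓝[<] ε)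
      (𝓝 (1/C * (ε ^ (m+2) * Real.exp (-C/ε)))) := by
    have hc : ContinuousAt (fun t : ℝ => 1/C * (t ^ (m+2) * Real.exp (-C / t))) ε :=
      continuousAt_const.mul ((Real.continuousAt_rpow_const ε (m+2) (Or.inl hε.ne')).mul
        (Real.continuous_exp.continuousAt.comp (continuousAt_const.div continuousAt_id hε.ne')))
    exact hc.continuousWithinAt.tendsto
  have hFTC := intervalIntegral.integral_eq_sub_of_hasDerivAt_of_tendsto hε hderiv hint ha hb
  rw [intervalIntegral.integral_of_le hε.le, integral_Ioc_eq_integral_Ioo,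
    MeasureTheory.integral_add
      ((aux_integrableOn m C ε hC).mono_set Ioo_subset_Ioc_self)
      (((aux_integrableOn (m+1) C ε hC).mono_set Ioo_subset_Ioc_self).const_mul _),
    MeasureTheory.integral_const_mul] at hFTC
  rw [hFTC]
  ring

lemma aux_ratio (m C : ℝ) (hC : 0 < C) :
    Tendsto (fun ε : ℝ => (∫ t in Ioo (0:ℝ) ε, t ^ m * Real.exp (-C / t)) /
        (1/C * ε ^ (m+2) * Real.exp (-C/ε))) (𝓝[>] (0:ℝ)) (𝓝 1) := by
  set K := |(m+2)/C| with hK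
  set R := fun ε : ℝ => (∫ t in Ioo (0:ℝ) ε, t ^ m * Real.exp (-C / t)) /
        (1/C * ε ^ (m+2) * Real.exp (-C/ε)) with hR
  have key : ∀ᶠ ε in 𝓝[>] (0:ℝ), ‖R ε - 1‖ ≤ 2 * K * ε := by
    have hmem : Ioo (0:ℝ) (1/(2*(K+1))) ∈ 𝓝[>] (0:ℝ) := by
      apply Ioo_mem_nhdsGT_of_mem
      constructor
      · rfl
      · positivity
    filter_upwards [hmem] with ε hε
    obtain ⟨hε0, hεK⟩ := hε
    have hKε : K * ε ≤ 1/2 := by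
      have hK0 : 0 ≤ K := abs_nonneg _
      rw [lt_div_iff₀ (by positivity)] at hεK
      nlinarith
    set I := ∫ t in Ioo (0:ℝ) ε, t ^ m * Real.exp (-C / t) with hI
    set I1 := ∫ t in Ioo (0:ℝ) ε, t ^ (m+1) * Real.exp (-C / t) with hI1
    set D := 1/C * ε ^ (m+2) * Real.exp (-C/ε) with hD
    have hDpos : 0 < D := by
      have := Real.rpow_pos_of_pos hε0 (m+2)
      have := Real.exp_pos (-C/ε)
      positivity
    have hid := aux_key_identity m C ε hC hε0
    rw [← hI, ← hI1, ← hD] at hid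
    have hI1nonneg : 0 ≤ I1 := by
      refine setIntegral_nonneg measurableSet_Ioo fun t ht => ?_
      have := Real.rpow_nonneg ht.1.le (m+1)
      have := (Real.exp_pos (-C/t)).le
      positivity
    have hInonneg : 0 ≤ I := by
      refine setIntegral_nonneg measurableSet_Ioo fun t ht => ?_
      have := Real.rpow_nonneg ht.1.le m
      have := (Real.exp_pos (-C/t)).le
      positivity
    -- I1 ≤ ε * I
    have hI1le : I1 ≤ ε * I := by
      have h1 : I1 ≤ ∫ t in Ioo (0:ℝ) ε, ε * (t ^ m * Real.exp (-C / t)) := by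
        refine setIntegral_mono_on
          ((aux_integrableOn (m+1) C ε hC).mono_set Ioo_subset_Ioc_self)
          (((aux_integrableOn m C ε hC).mono_set Ioo_subset_Ioc_self).const_mul _)
          measurableSet_Ioo fun t ht => ?_
        have h2 : t ^ (m+1) = t ^ m * t := by
          rw [Real.rpow_add ht.1, Real.rpow_one]
        rw [h2]
        have hexp := (Real.exp_pos (-C/t)).le
        have htm := Real.rpow_nonneg ht.1.le m
        have : t ^ m * t ≤ t ^ m * ε := by nlinarith [ht.2]
        nlinarith
      rwa [MeasureTheory.integral_const_mul] at h1
    -- I1 ≤ 2 ε D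
    have hI1bound : I1 ≤ 2 * ε * D := by
      have habs : (m+2)/C * I1 ≥ -(K * I1) := by
        have := neg_abs_le ((m+2)/C)
        nlinarith
      have hIle : I ≤ D + K * I1 := by nlinarith
      have : I1 ≤ ε * D + ε * K * I1 := by nlinarith
      nlinarith [mul_nonneg hε0.le (mul_nonneg (abs_nonneg ((m+2)/C)) hI1nonneg)]
    have hRval : R ε - 1 = -((m+2)/C * I1) / D := by
      rw [hR]
      simp only
      rw [← hI, ← hD, div_sub_one hDpos.ne']
      congr 1
      linarith
    rw [hRval, Real.norm_eq_abs, abs_div, abs_of_pos hDpos, abs_neg, abs_mul, abs_of_nonneg hI1nonneg,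
      div_le_iff₀ hDpos]
    calc K * I1 ≤ K * (2 * ε * D) := by nlinarith [abs_nonneg ((m+2)/C)]
      _ = 2 * K * ε * D := by ring
  have hlim : Tendsto (fun ε : ℝ => 2 * K * ε) (𝓝[>] (0:ℝ)) (𝓝 0) := by
    have : Tendsto (fun ε : ℝ => 2 * K * ε) (𝓝 (0:ℝ)) (𝓝 (2*K*0)) :=
      (tendsto_id.const_mul _)
    simpa using this.mono_left nhdsWithin_le_nhds
  have h0 : Tendsto (fun ε => R ε - 1) (𝓝[>] (0:ℝ)) (𝓝 0) :=
    squeeze_zero_norm' key hlim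
  have := h0.add_const 1
  simpa using this

/-- For `m ∈ ℝ` and `C > 0`,
`∫₀^{2/r} t^m e^{-C/t} dt ∼ (1/C)(2/r)^{m+2} e^{-Cr/2}` as `r → ∞`. -/
theorem uniform_window_asymptotic (m C : ℝ) (hC : 0 < C) :
    Tendsto (fun r : ℝ =>
        (∫ t in Ioo (0:ℝ) (2 / r), t ^ m * Real.exp (-C / t)) /
          (1 / C * (2 / r) ^ (m + 2) * Real.exp (-C * r / 2)))
      atTop (𝓝 1) := by
  have hcomp : Tendsto (fun r : ℝ => 2 / r) atTop (𝓝[>] (0:ℝ)) := by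
    rw [tendsto_nhdsWithin_iff]
    constructor
    · simpa [div_eq_mul_inv] using tendsto_inv_atTop_zero.const_mul (2:ℝ)
    · filter_upwards [eventually_gt_atTop 0] with r hr
      exact div_pos two_pos hr
  have h := (aux_ratio m C hC).comp hcomp
  refine h.congr' ?_
  filter_upwards [eventually_gt_atTop 0] with r hr
  simp only [Function.comp_apply]
  rw [show -C / (2 / r) = -C * r / 2 by rw [div_div_eq_mul_div]]
end
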